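/- arXiv:0809.1379 — 6 statements merged into one kernel-verified Lean document; each statement's English description precedes it below -/
import Mathlib

section
/- For every natural number N and every real t ≥ 0, Σ_{x=0}^{N} (N choose x) · exp(−2·(N + x·(N−x))·t) ≤ 2·exp(−2·N·t)·(1 + exp(−N·t))^N. -/
/-- combinatorial core of the paper's Corollary 4.
For every natural `N` and real `t ≥ 0`,
`∑_{x=0}^{N} (N choose x) exp(-2 (N + x (N-x)) t) ≤ 2 exp(-2 N t) (1 + exp(-N t))^N`. -/
theorem stmt_1 (N : ℕ) (t : ℝ) (ht : 0 ≤ t) :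
    ∑ x ∈ Finset.range (N + 1),
        (N.choose x : ℝ) * Real.exp (-2 * ((N : ℝ) + (x : ℝ) * ((N : ℝ) - (x : ℝ))) * t)
      ≤ 2 * Real.exp (-2 * (N : ℝ) * t) * (1 + Real.exp (-(N : ℝ) * t)) ^ N := by
  set E : ℝ := Real.exp (-(N : ℝ) * t) with hEdef
  have hE : 0 ≤ E := (Real.exp_pos _).le
  have key : ∀ x ∈ Finset.range (N + 1),
      (N.choose x : ℝ) * Real.exp (-2 * ((N : ℝ) + (x : ℝ) * ((N : ℝ) - (x : ℝ))) * t)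
        ≤ (N.choose x : ℝ) * (Real.exp (-2 * (N : ℝ) * t) * (E ^ x + E ^ (N - x))) := by
    intro x hx
    have hxN : x ≤ N := Nat.lt_succ_iff.mp (Finset.mem_range.mp hx)
    refine mul_le_mul_of_nonneg_left ?_ (Nat.cast_nonneg _)
    have hsplit : Real.exp (-2 * ((N : ℝ) + (x : ℝ) * ((N : ℝ) - (x : ℝ))) * t)
        = Real.exp (-2 * (N : ℝ) * t) * Real.exp (-2 * ((x : ℝ) * ((N : ℝ) - (x : ℝ))) * t) := by
      rw [← Real.exp_add]; ring_nf
    rw [hsplit]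
    refine mul_le_mul_of_nonneg_left ?_ (Real.exp_pos _).le
    -- show exp(-2 x (N-x) t) ≤ E^x + E^(N-x)
    have hEx : ∀ k : ℕ, E ^ k = Real.exp ((k : ℝ) * (-(N : ℝ) * t)) := by
      intro k; rw [hEdef, ← Real.exp_nat_mul]
    rcases le_or_gt (2 * x) N with h | h
    · -- x ≤ N - x : bound by E^x
      have : Real.exp (-2 * ((x : ℝ) * ((N : ℝ) - (x : ℝ))) * t)
          ≤ E ^ x := by
        rw [hEx x]
        apply Real.exp_le_exp.mpr
        have hx0 : (0 : ℝ) ≤ (x : ℝ) := Nat.cast_nonneg _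
        have h2 : 2 * (x : ℝ) ≤ (N : ℝ) := by exact_mod_cast h
        nlinarith [mul_nonneg (mul_nonneg ht hx0) (by linarith : (0:ℝ) ≤ (N:ℝ) - 2*(x:ℝ))]
      calc Real.exp (-2 * ((x : ℝ) * ((N : ℝ) - (x : ℝ))) * t) ≤ E ^ x := this
        _ ≤ E ^ x + E ^ (N - x) := le_add_of_nonneg_right (pow_nonneg hE _)
    · -- N - x ≤ x : bound by E^(N-x)
      have : Real.exp (-2 * ((x : ℝ) * ((N : ℝ) - (x : ℝ))) * t)
          ≤ E ^ (N - x) := by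
        rw [hEx (N - x)]
        apply Real.exp_le_exp.mpr
        have hcast : ((N - x : ℕ) : ℝ) = (N : ℝ) - (x : ℝ) := Nat.cast_sub hxN
        rw [hcast]
        have hx0 : (0 : ℝ) ≤ (N : ℝ) - (x : ℝ) := by
          have := hxN; have : (x : ℝ) ≤ (N : ℝ) := by exact_mod_cast hxN
          linarith
        have h2 : (N : ℝ) ≤ 2 * (x : ℝ) := by exact_mod_cast h.le
        nlinarith [mul_nonneg (mul_nonneg ht hx0) (by linarith : (0:ℝ) ≤ 2*(x:ℝ) - (N:ℝ))]
      calc Real.exp (-2 * ((x : ℝ) * ((N : ℝ) - (x : ℝ))) * t) ≤ E ^ (N - x) := this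
        _ ≤ E ^ x + E ^ (N - x) := le_add_of_nonneg_left (pow_nonneg hE _)
  calc ∑ x ∈ Finset.range (N + 1),
        (N.choose x : ℝ) * Real.exp (-2 * ((N : ℝ) + (x : ℝ) * ((N : ℝ) - (x : ℝ))) * t)
      ≤ ∑ x ∈ Finset.range (N + 1),
        (N.choose x : ℝ) * (Real.exp (-2 * (N : ℝ) * t) * (E ^ x + E ^ (N - x))) :=
        Finset.sum_le_sum key
    _ = Real.exp (-2 * (N : ℝ) * t) *
        ((∑ x ∈ Finset.range (N + 1), E ^ x * 1 ^ (N - x) * (N.choose x : ℝ)) +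
         (∑ x ∈ Finset.range (N + 1), 1 ^ x * E ^ (N - x) * (N.choose x : ℝ))) := by
        rw [← Finset.sum_add_distrib, Finset.mul_sum]
        apply Finset.sum_congr rfl
        intro x _; ring
    _ = 2 * Real.exp (-2 * (N : ℝ) * t) * (1 + E) ^ N := by
        rw [← add_pow, ← add_pow]
        ring_nf
end

section
/- Let V be a finite set of n ≥ 4 vertices carrying a random graph as in the context, let s ≠ t be vertices of V, let λ ∈ (0,1], and suppose that P(C_{a,b} = 1) ≥ λ for every unordered pair {a,b} of distinct vertices and that the random graph has the independence-in-cut property for (s,t). For a real ε > 0 and each s-t cut S, let A_S be the event { C(S) ≤ (1−ε)·E[C(S)] }. Then P( ∪_S A_S ) ≤ 2·exp(−2·ε²·λ²·(n−2)) · (1 + exp(−ε²·λ²·(n−2)))^{n−2}, where the union is over all s-t cuts S. -/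
open MeasureTheory ProbabilityTheory Finset

/-- The capacity of the cut determined by `S` (edges from `S` to its complement):
`C(S) = ∑_{a ∈ S, b ∉ S} C_{a,b}`. -/
noncomputable def cutCap {V Ω : Type*} [Fintype V] [DecidableEq V]
    (C : V → V → Ω → ℝ) (S : Finset V) (ω : Ω) : ℝ :=
  ∑ a ∈ S, ∑ b ∈ Sᶜ, C a b ω

/-- The independence-in-cut property for the pair `(s,t)`: for every `s`-`t` cut `S`,
the family of edge variables crossing the cut is mutually independent. -/
def IndepInCut {V Ω : Type*} [Fintype V] [DecidableEq V] [MeasureSpace Ω]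
    (C : V → V → Ω → ℝ) (s t : V) : Prop :=
  ∀ S : Finset V, s ∈ S → t ∉ S →
    iIndepFun
      (fun p : (S ×ˢ Sᶜ : Finset (V × V)) => C (p : V × V).1 (p : V × V).2) volume


section AuxHoeffding
set_option linter.unusedSectionVars false
open Real MeasureTheory ProbabilityTheory Finset


lemma Dpos {p : ℝ} (hp0 : 0 ≤ p) (hp1 : p ≤ 1) (x : ℝ) : 0 < 1 - p + p * exp x := by
  rcases lt_or_ge p 1 with h | h
  · have : 0 ≤ p * exp x := mul_nonneg hp0 (exp_pos x).le
    linarith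
  · have hp : p = 1 := le_antisymm hp1 h
    subst hp; simpa using exp_pos x

lemma bernoulli_mgf_bound {p : ℝ} (hp0 : 0 ≤ p) (hp1 : p ≤ 1) (t : ℝ) :
    1 - p + p * exp t ≤ exp (p * t + t ^ 2 / 8) := by
  set f : ℝ → ℝ := fun x => p * x + x ^ 2 / 8 - Real.log (1 - p + p * exp x) with hfdef
  set f1 : ℝ → ℝ := fun x => p + x / 4 - p * exp x / (1 - p + p * exp x) with hf1def
  have hDpos := Dpos hp0 hp1
  have hderD : ∀ x : ℝ, HasDerivAt (fun y => 1 - p + p * exp y) (p * exp x) x := by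
    intro x
    exact ((Real.hasDerivAt_exp x).const_mul p).const_add (1 - p)
  have hf : ∀ x, HasDerivAt f (f1 x) x := by
    intro x
    have h := (((hasDerivAt_id x).const_mul p).add
        ((hasDerivAt_pow 2 x).div_const 8)).sub ((hderD x).log (hDpos x).ne')
    refine h.congr_deriv ?_
    simp [hf1def]
    ring
  have hf1 : ∀ x, HasDerivAt f1
      (1 / 4 - p * exp x * (1 - p) / (1 - p + p * exp x) ^ 2) x := by
    intro x
    have hq : HasDerivAt (fun y => p * exp y / (1 - p + p * exp y))
        ((p * exp x * (1 - p + p * exp x) - p * exp x * (p * exp x)) /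
          (1 - p + p * exp x) ^ 2) x :=
      ((Real.hasDerivAt_exp x).const_mul p).div (hderD x) (hDpos x).ne'
    have h := (((hasDerivAt_id x).div_const 4).const_add p).sub hq
    refine h.congr_deriv ?_
    have : p * exp x * (1 - p + p * exp x) - p * exp x * (p * exp x)
        = p * exp x * (1 - p) := by ring
    rw [this]
  have hf1mono : Monotone f1 := by
    refine monotone_of_deriv_nonneg (fun x => (hf1 x).differentiableAt) (fun x => ?_)
    rw [(hf1 x).deriv]
    have hD2 : 0 < (1 - p + p * exp x) ^ 2 := pow_pos (hDpos x) 2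
    have h4 : p * exp x * (1 - p) / (1 - p + p * exp x) ^ 2 ≤ 1 / 4 := by
      rw [div_le_iff₀ hD2]
      nlinarith [sq_nonneg (1 - p - p * exp x)]
    linarith
  have hf10 : f1 0 = 0 := by
    simp [hf1def, Real.exp_zero]
  have hfnonneg : ∀ x, 0 ≤ f x := by
    intro x
    have hf0 : f 0 = 0 := by
      simp [hfdef, Real.exp_zero]
    rcases le_total 0 x with hx | hx
    · have hmono : MonotoneOn f (Set.Ici 0) := by
        refine monotoneOn_of_deriv_nonneg (convex_Ici 0)
          (fun y _ => (hf y).differentiableAt.continuousAt.continuousWithinAt)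
          (fun y _ => (hf y).differentiableAt.differentiableWithinAt)
          (fun y hy => ?_)
        rw [(hf y).deriv]
        have : (0:ℝ) ≤ y := le_of_lt (by simpa using hy)
        calc (0:ℝ) = f1 0 := hf10.symm
          _ ≤ f1 y := hf1mono this
      have := hmono (Set.self_mem_Ici) (Set.mem_Ici.2 hx) hx
      linarith [hf0 ▸ this]
    · have hanti : AntitoneOn f (Set.Iic 0) := by
        refine antitoneOn_of_deriv_nonpos (convex_Iic 0)
          (fun y _ => (hf y).differentiableAt.continuousAt.continuousWithinAt)
          (fun y _ => (hf y).differentiableAt.differentiableWithinAt)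
          (fun y hy => ?_)
        rw [(hf y).deriv]
        have hy0 : y ≤ (0:ℝ) := le_of_lt (by simpa using hy)
        calc f1 y ≤ f1 0 := hf1mono hy0
          _ = 0 := hf10
      have := hanti (Set.mem_Iic.2 hx) (Set.self_mem_Iic) hx
      linarith [hf0 ▸ this]
  have hft := hfnonneg t
  have hlog : Real.log (1 - p + p * exp t) ≤ p * t + t ^ 2 / 8 := by
    simp only [hfdef] at hft; linarith
  exact (Real.log_le_iff_le_exp (hDpos t)).mp hlog


section PartB
variable {Ω : Type*} [MeasureSpace Ω] [IsProbabilityMeasure (volume : Measure Ω)]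

lemma indic_eq {X : Ω → ℝ} (h01 : ∀ ω, X ω = 0 ∨ X ω = 1) :
    X = Set.indicator {ω | X ω = 1} (fun _ => (1:ℝ)) := by
  funext ω
  rcases h01 ω with h | h <;> simp [Set.indicator_apply, h]

lemma meas_one {X : Ω → ℝ} (hXm : Measurable X) : MeasurableSet {ω | X ω = 1} := by
  have : {ω | X ω = 1} = X ⁻¹' {1} := by ext ω; simp
  rw [this]
  exact hXm (measurableSet_singleton 1)

lemma integrable_01 {X : Ω → ℝ} (hXm : Measurable X) (h01 : ∀ ω, X ω = 0 ∨ X ω = 1) :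
    Integrable X (volume : Measure Ω) := by
  rw [indic_eq h01]
  exact (integrable_const (1:ℝ)).indicator (meas_one hXm)

lemma integral_01 {X : Ω → ℝ} (hXm : Measurable X) (h01 : ∀ ω, X ω = 0 ∨ X ω = 1) :
    ∫ ω, X ω = ((volume : Measure Ω) {ω | X ω = 1}).toReal := by
  conv_lhs => rw [indic_eq h01]
  rw [integral_indicator_const (1:ℝ) (meas_one hXm)]
  simp
  rfl

lemma mgf_01 {X : Ω → ℝ} (hXm : Measurable X) (h01 : ∀ ω, X ω = 0 ∨ X ω = 1) (t : ℝ) :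
    mgf X (volume : Measure Ω) t
      = 1 - ((volume : Measure Ω) {ω | X ω = 1}).toReal
        + ((volume : Measure Ω) {ω | X ω = 1}).toReal * exp t := by
  have hrw : (fun ω => exp (t * X ω)) = fun ω => 1 + (exp t - 1) * X ω := by
    funext ω
    rcases h01 ω with h | h <;> simp [h] <;> ring
  rw [mgf, hrw, integral_add (integrable_const 1)
    ((integrable_01 hXm h01).const_mul _), integral_const_mul _ _,
    integral_01 hXm h01]
  simp
  ring

lemma mgf_01_le {X : Ω → ℝ} (hXm : Measurable X) (h01 : ∀ ω, X ω = 0 ∨ X ω = 1) (t : ℝ) :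
    mgf X (volume : Measure Ω) t
      ≤ exp (((volume : Measure Ω) {ω | X ω = 1}).toReal * t + t ^ 2 / 8) := by
  rw [mgf_01 hXm h01 t]
  have h1 : (volume : Measure Ω) {ω | X ω = 1} ≤ 1 := prob_le_one
  have hp1 : ((volume : Measure Ω) {ω | X ω = 1}).toReal ≤ 1 := by
    simpa using ENNReal.toReal_mono (by norm_num) h1
  exact bernoulli_mgf_bound ENNReal.toReal_nonneg hp1 t

lemma hoeffding_01 {ι : Type*} [Fintype ι] [Nonempty ι] (X : ι → Ω → ℝ)
    (hXm : ∀ i, Measurable (X i)) (h01 : ∀ i ω, X i ω = 0 ∨ X i ω = 1)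
    (hind : iIndepFun X (volume : Measure Ω))
    (lam : ℝ) (hlam0 : 0 < lam)
    (hlow : ∀ i, lam ≤ ((volume : Measure Ω) {ω | X i ω = 1}).toReal)
    (ε : ℝ) (hε : 0 < ε) :
    volume {ω | ∑ i, X i ω ≤ (1 - ε) * ∫ ω', ∑ i, X i ω'}
      ≤ ENNReal.ofReal (Real.exp (-2 * ε^2 * lam^2 * (Fintype.card ι : ℝ))) := by
  classical
  set p : ι → ℝ := fun i => ((volume : Measure Ω) {ω | X i ω = 1}).toReal with hpdef
  set M : ℝ := ∑ i, p i with hMdef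
  set m : ℝ := (Fintype.card ι : ℝ) with hmdef
  have hm0 : 0 < m := by
    simp only [hmdef]
    exact_mod_cast Fintype.card_pos
  have hMlow : lam * m ≤ M := by
    have : ∑ _i : ι, lam ≤ M := Finset.sum_le_sum (fun i _ => hlow i)
    simpa [mul_comm, hmdef] using this
  have hM0 : 0 < M := lt_of_lt_of_le (by positivity) hMlow
  have hIntM : ∫ ω', ∑ i, X i ω' = M := by
    rw [integral_finset_sum _ (fun i _ => integrable_01 (hXm i) (h01 i))]
    exact Finset.sum_congr rfl (fun i _ => integral_01 (hXm i) (h01 i))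
  set t : ℝ := -(4 * ε * M / m) with htdef
  have ht : t ≤ 0 := by
    have : 0 ≤ 4 * ε * M / m := by positivity
    simp only [htdef]; linarith
  have hSm : Measurable (fun ω => ∑ i, X i ω) :=
    Finset.measurable_sum Finset.univ (fun i _ => hXm i)
  have hIntExp : Integrable (fun ω => exp (t * ∑ i, X i ω)) (volume : Measure Ω) := by
    refine Integrable.mono' (integrable_const (exp (|t| * m)))
      ((hSm.const_mul t).exp.aestronglyMeasurable) (ae_of_all _ (fun ω => ?_))
    rw [Real.norm_eq_abs, Real.abs_exp]
    apply Real.exp_le_exp.2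
    have hS0 : 0 ≤ ∑ i, X i ω :=
      Finset.sum_nonneg (fun i _ => by rcases h01 i ω with h | h <;> simp [h])
    have hSM : ∑ i, X i ω ≤ m := by
      have : ∑ i, X i ω ≤ ∑ _i : ι, (1:ℝ) :=
        Finset.sum_le_sum (fun i _ => by rcases h01 i ω with h | h <;> simp [h])
      simpa [hmdef] using this
    calc t * ∑ i, X i ω ≤ |t| * ∑ i, X i ω :=
          mul_le_mul_of_nonneg_right (le_abs_self t) hS0
      _ ≤ |t| * m := mul_le_mul_of_nonneg_left hSM (abs_nonneg t)
  have hsum_eq : (fun ω => ∑ i, X i ω) = ∑ i, X i := by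
    funext ω; simp
  have hchern := measure_le_le_exp_mul_mgf (μ := (volume : Measure Ω))
      (X := fun ω => ∑ i, X i ω) ((1 - ε) * M) ht hIntExp
  have hmgf : mgf (fun ω => ∑ i, X i ω) (volume : Measure Ω) t
      = ∏ i, mgf (X i) (volume : Measure Ω) t := by
    rw [hsum_eq]
    exact hind.mgf_sum hXm Finset.univ
  have hmgf_le : mgf (fun ω => ∑ i, X i ω) (volume : Measure Ω) t
      ≤ exp (t * M + m * t ^ 2 / 8) := by
    rw [hmgf]
    calc ∏ i, mgf (X i) (volume : Measure Ω) t
        ≤ ∏ i, exp (p i * t + t ^ 2 / 8) :=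
          Finset.prod_le_prod (fun i _ => mgf_nonneg)
            (fun i _ => mgf_01_le (hXm i) (h01 i) t)
      _ = exp (∑ i, (p i * t + t ^ 2 / 8)) := (Real.exp_sum _ _).symm
      _ = exp (t * M + m * t ^ 2 / 8) := by
          congr 1
          rw [Finset.sum_add_distrib, ← Finset.sum_mul]
          simp [hmdef, hMdef, mul_comm]
          ring
  have hexp_le : exp (-t * ((1 - ε) * M)) * exp (t * M + m * t ^ 2 / 8)
      ≤ exp (-2 * ε ^ 2 * lam ^ 2 * m) := by
    rw [← Real.exp_add]
    apply Real.exp_le_exp.2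
    have hteq : -t * ((1 - ε) * M) + (t * M + m * t ^ 2 / 8) = -2 * ε^2 * M^2 / m := by
      simp only [htdef]
      field_simp
      ring
    rw [hteq]
    have hM2 : lam ^ 2 * m ^ 2 ≤ M ^ 2 := by nlinarith [hMlow, mul_pos hlam0 hm0]
    rw [div_le_iff₀ hm0]
    nlinarith [hM2, mul_pos hε hε]
  have hreal : ((volume : Measure Ω) {ω | ∑ i, X i ω ≤ (1 - ε) * ∫ ω', ∑ i, X i ω'}).toReal
      ≤ exp (-2 * ε ^ 2 * lam ^ 2 * m) := by
    rw [hIntM]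
    calc ((volume : Measure Ω) {ω | ∑ i, X i ω ≤ (1 - ε) * M}).toReal
        ≤ exp (-t * ((1 - ε) * M)) * mgf (fun ω => ∑ i, X i ω) (volume : Measure Ω) t :=
          hchern
      _ ≤ exp (-t * ((1 - ε) * M)) * exp (t * M + m * t ^ 2 / 8) :=
          mul_le_mul_of_nonneg_left hmgf_le (exp_pos _).le
      _ ≤ exp (-2 * ε ^ 2 * lam ^ 2 * m) := hexp_le
  calc (volume : Measure Ω) {ω | ∑ i, X i ω ≤ (1 - ε) * ∫ ω', ∑ i, X i ω'}
      = ENNReal.ofReal (((volume : Measure Ω)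
          {ω | ∑ i, X i ω ≤ (1 - ε) * ∫ ω', ∑ i, X i ω'}).toReal) :=
        (ENNReal.ofReal_toReal (measure_ne_top _ _)).symm
    _ ≤ ENNReal.ofReal (Real.exp (-2 * ε^2 * lam^2 * m)) := ENNReal.ofReal_le_ofReal hreal

end PartB

end AuxHoeffding

/-- paper's Corollary 4. Union bound over all `s`-`t` cuts for the
events `A_S = {C(S) ≤ (1-ε) E[C(S)]}`. -/
theorem stmt_2 {V Ω : Type*} [Fintype V] [DecidableEq V] [MeasureSpace Ω]
    [IsProbabilityMeasure (volume : Measure Ω)]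
    (n : ℕ) (hn : Fintype.card V = n) (hn4 : 4 ≤ n)
    (s t : V) (hst : s ≠ t)
    (lam : ℝ) (hlam0 : 0 < lam) (hlam1 : lam ≤ 1)
    (C : V → V → Ω → ℝ)
    (hsymm : ∀ a b, C a b = C b a)
    (hmeas : ∀ a b, Measurable (C a b))
    (h01 : ∀ a b ω, C a b ω = 0 ∨ C a b ω = 1)
    (hlow : ∀ a b : V, a ≠ b → ENNReal.ofReal lam ≤ volume {ω | C a b ω = 1})
    (hindep : IndepInCut C s t)
    (ε : ℝ) (hε : 0 < ε) :
    volume (⋃ (S : Finset V) (_ : s ∈ S ∧ t ∉ S),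
        {ω | cutCap C S ω ≤ (1 - ε) * ∫ ω', cutCap C S ω'})
      ≤ ENNReal.ofReal (2 * Real.exp (-2 * ε ^ 2 * lam ^ 2 * ((n : ℝ) - 2)) *
          (1 + Real.exp (-(ε ^ 2) * lam ^ 2 * ((n : ℝ) - 2))) ^ (n - 2)) := by
  classical
  have hn2 : 2 ≤ n := le_trans (by norm_num) hn4
  set N : ℕ := n - 2 with hNdef
  have hNr : ((N : ℝ)) = (n : ℝ) - 2 := by
    rw [hNdef]
    push_cast [Nat.cast_sub hn2]
    ring
  set q : ℝ := ε ^ 2 * lam ^ 2 with hqdef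
  have hq : 0 < q := by positivity
  set c : ℝ := q * ((n : ℝ) - 2) with hcdef
  have hnr2 : (2 : ℝ) ≤ (n : ℝ) := by exact_mod_cast hn2
  have hc0 : 0 ≤ c := mul_nonneg hq.le (by linarith)
  set x : ℝ := Real.exp (-c) with hxdef
  have hx0 : 0 < x := Real.exp_pos _
  have hx1 : x ≤ 1 := Real.exp_le_one_iff.2 (by linarith)
  set φ : ℕ → ℝ := fun k => Real.exp (-2 * q * ((k : ℝ) * ((n : ℝ) - (k : ℝ)))) with hφdef
  -- Per-cut bound
  have hcut : ∀ S : Finset V, s ∈ S → t ∉ S →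
      volume {ω | cutCap C S ω ≤ (1 - ε) * ∫ ω', cutCap C S ω'}
        ≤ ENNReal.ofReal (φ S.card) := by
    intro S hs ht
    haveI hne : Nonempty ((S ×ˢ Sᶜ : Finset (V × V)) : Type _) :=
      ⟨⟨(s, t), by simp [Finset.mem_product, hs, Finset.mem_compl, ht]⟩⟩
    have hlow' : ∀ i : (S ×ˢ Sᶜ : Finset (V × V)),
        lam ≤ ((volume : Measure Ω) {ω | C (i : V × V).1 (i : V × V).2 ω = 1}).toReal := by
      intro i
      obtain ⟨hi1, hi2⟩ := Finset.mem_product.1 i.2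
      have hne12 : (i : V × V).1 ≠ (i : V × V).2 := by
        intro h
        rw [h] at hi1
        exact (Finset.mem_compl.1 hi2) hi1
      have h := ENNReal.toReal_mono (measure_ne_top _ _) (hlow _ _ hne12)
      rwa [ENNReal.toReal_ofReal hlam0.le] at h
    have hsum : ∀ ω, cutCap C S ω
        = ∑ i : (S ×ˢ Sᶜ : Finset (V × V)), C (i : V × V).1 (i : V × V).2 ω := by
      intro ω
      rw [cutCap, ← Finset.sum_product']
      exact (Finset.sum_coe_sort (S ×ˢ Sᶜ) (fun p => C p.1 p.2 ω)).symm
    have hb := hoeffding_01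
        (fun i : (S ×ˢ Sᶜ : Finset (V × V)) => C (i : V × V).1 (i : V × V).2)
        (fun i => hmeas _ _) (fun i ω => h01 _ _ ω) (hindep S hs ht) lam hlam0 hlow' ε hε
    rw [Fintype.card_coe, Finset.card_product, Finset.card_compl, hn] at hb
    have hseteq : {ω | cutCap C S ω ≤ (1 - ε) * ∫ ω', cutCap C S ω'}
        = {ω | ∑ i : (S ×ˢ Sᶜ : Finset (V × V)), C (i : V × V).1 (i : V × V).2 ω
            ≤ (1 - ε) * ∫ ω', ∑ i : (S ×ˢ Sᶜ : Finset (V × V)),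
                C (i : V × V).1 (i : V × V).2 ω'} := by
      simp only [hsum]
    rw [hseteq]
    refine hb.trans (ENNReal.ofReal_le_ofReal ?_)
    have hkn : S.card ≤ n := by rw [← hn]; exact Finset.card_le_univ S
    have hcast : ((S.card * (n - S.card) : ℕ) : ℝ)
        = (S.card : ℝ) * ((n : ℝ) - (S.card : ℝ)) := by
      rw [Nat.cast_mul, Nat.cast_sub hkn]
    rw [hφdef]
    apply le_of_eq
    rw [hcast, hqdef]
    ring_nf
  -- union bound
  set cutsF : Finset (Finset V) := Finset.univ.filter (fun S => s ∈ S ∧ t ∉ S) with hcutsF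
  have hub : volume (⋃ (S : Finset V) (_ : s ∈ S ∧ t ∉ S),
      {ω | cutCap C S ω ≤ (1 - ε) * ∫ ω', cutCap C S ω'})
      ≤ ∑ S ∈ cutsF, volume {ω | cutCap C S ω ≤ (1 - ε) * ∫ ω', cutCap C S ω'} := by
    refine le_trans (measure_mono ?_) (measure_biUnion_finset_le cutsF _)
    intro ω hω
    simp only [Set.mem_iUnion] at hω ⊢
    obtain ⟨S, hS, h⟩ := hω
    exact ⟨S, by simp [hcutsF, hS.1, hS.2], h⟩
  refine hub.trans ?_
  have hsum2 : ∑ S ∈ cutsF, volume {ω | cutCap C S ω ≤ (1 - ε) * ∫ ω', cutCap C S ω'}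
      ≤ ∑ S ∈ cutsF, ENNReal.ofReal (φ S.card) := by
    refine Finset.sum_le_sum (fun S hS => ?_)
    obtain ⟨hs', ht'⟩ := (Finset.mem_filter.1 hS).2
    exact hcut S hs' ht'
  refine hsum2.trans ?_
  rw [← ENNReal.ofReal_sum_of_nonneg (fun S _ => (Real.exp_pos _).le)]
  refine ENNReal.ofReal_le_ofReal ?_
  -- now the real combinatorial estimate
  set U : Finset V := ({s, t} : Finset V)ᶜ with hUdef
  have hUcard : U.card = N := by
    rw [hUdef, Finset.card_compl, hn]
    congr 1
    rw [Finset.card_insert_of_notMem (by simp [hst]), Finset.card_singleton]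
  have hsU : s ∉ U := by simp [hUdef]
  have htU : t ∉ U := by simp [hUdef]
  have step1 : ∑ S ∈ cutsF, φ S.card = ∑ T ∈ U.powerset, φ (T.card + 1) := by
    refine Finset.sum_bij' (fun S _ => S.erase s) (fun T _ => insert s T)
      ?_ ?_ ?_ ?_ ?_
    · intro S hS
      obtain ⟨hs', ht'⟩ := (Finset.mem_filter.1 hS).2
      rw [Finset.mem_powerset]
      intro y hy
      obtain ⟨hy1, hy2⟩ := Finset.mem_erase.1 hy
      rw [hUdef, Finset.mem_compl]
      simp only [Finset.mem_insert, Finset.mem_singleton]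
      rintro (rfl | rfl)
      · exact hy1 rfl
      · exact ht' hy2
    · intro T hT
      rw [Finset.mem_powerset] at hT
      rw [hcutsF, Finset.mem_filter]
      refine ⟨Finset.mem_univ _, Finset.mem_insert_self _ _, ?_⟩
      intro hmem
      rcases Finset.mem_insert.1 hmem with h | h
      · exact hst h.symm
      · exact htU (hT h)
    · intro S hS
      exact Finset.insert_erase (Finset.mem_filter.1 hS).2.1
    · intro T hT
      refine Finset.erase_insert ?_
      intro hsT
      exact hsU (Finset.mem_powerset.1 hT hsT)
    · intro S hS
      obtain ⟨hs', _⟩ := (Finset.mem_filter.1 hS).2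
      congr 1
      rw [Finset.card_erase_of_mem hs']
      have : 1 ≤ S.card := Finset.card_pos.2 ⟨s, hs'⟩
      omega
  rw [step1]
  have step2 : ∑ T ∈ U.powerset, φ (T.card + 1)
      = ∑ j ∈ Finset.range (N + 1), N.choose j • φ (j + 1) := by
    rw [Finset.sum_powerset_apply_card (fun k => φ (k + 1)), hUcard]
  rw [step2]
  -- per-index bound
  have hφle : ∀ j, j ≤ N → φ (j + 1) ≤ Real.exp (-(2 * c)) * x ^ (min j (N - j)) := by
    intro j hjN
    rw [hxdef, ← Real.exp_nat_mul, ← Real.exp_add, hφdef]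
    simp only []
    rw [Real.exp_le_exp]
    have hjr : (j : ℝ) ≤ (N : ℝ) := by exact_mod_cast hjN
    have hjr0 : (0 : ℝ) ≤ (j : ℝ) := Nat.cast_nonneg j
    have hmincast : ((min j (N - j) : ℕ) : ℝ) = min (j : ℝ) ((N : ℝ) - (j : ℝ)) := by
      rw [Nat.cast_min, Nat.cast_sub hjN]
    have hcast1 : ((j + 1 : ℕ) : ℝ) = (j : ℝ) + 1 := by push_cast; ring
    rw [hcast1, hmincast, hcdef, ← hNr]
    rcases le_total (j : ℝ) ((N : ℝ) - (j : ℝ)) with hcase | hcase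
    · rw [min_eq_left hcase]
      have hkey : 0 ≤ q * (j : ℝ) * ((N : ℝ) - 2 * (j : ℝ)) :=
        mul_nonneg (mul_nonneg hq.le hjr0) (by linarith)
      have hnN : (n : ℝ) = (N : ℝ) + 2 := by rw [hNr]; ring
      rw [hnN]
      nlinarith [hq]
    · rw [min_eq_right hcase]
      have hkey : 0 ≤ q * ((N : ℝ) - (j : ℝ)) * (2 * (j : ℝ) - (N : ℝ)) :=
        mul_nonneg (mul_nonneg hq.le (by linarith)) (by linarith)
      have hnN : (n : ℝ) = (N : ℝ) + 2 := by rw [hNr]; ring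
      rw [hnN]
      nlinarith [hq]
  have step3 : ∑ j ∈ Finset.range (N + 1), N.choose j • φ (j + 1)
      ≤ Real.exp (-(2 * c)) * ∑ j ∈ Finset.range (N + 1),
          (N.choose j : ℝ) * x ^ (min j (N - j)) := by
    rw [Finset.mul_sum]
    refine Finset.sum_le_sum (fun j hj => ?_)
    rw [nsmul_eq_mul]
    have hjN : j ≤ N := Nat.lt_succ_iff.1 (Finset.mem_range.1 hj)
    calc (N.choose j : ℝ) * φ (j + 1)
        ≤ (N.choose j : ℝ) * (Real.exp (-(2 * c)) * x ^ (min j (N - j))) :=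
          mul_le_mul_of_nonneg_left (hφle j hjN) (Nat.cast_nonneg _)
      _ = Real.exp (-(2 * c)) * ((N.choose j : ℝ) * x ^ (min j (N - j))) := by ring
  refine step3.trans ?_
  -- binomial sums
  have hbinom2 : ∑ j ∈ Finset.range (N + 1), (N.choose j : ℝ) * x ^ (N - j)
      = (1 + x) ^ N := by
    rw [add_pow]
    refine Finset.sum_congr rfl (fun j hj => ?_)
    rw [one_pow]
    ring
  have hbinom : ∑ j ∈ Finset.range (N + 1), (N.choose j : ℝ) * x ^ j = (1 + x) ^ N := by
    rw [← hbinom2]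
    calc ∑ j ∈ Finset.range (N + 1), (N.choose j : ℝ) * x ^ j
        = ∑ j ∈ Finset.range (N + 1), (N.choose (N - j) : ℝ) * x ^ j := by
          refine Finset.sum_congr rfl (fun j hj => ?_)
          rw [Nat.choose_symm (Nat.lt_succ_iff.1 (Finset.mem_range.1 hj))]
      _ = ∑ j ∈ Finset.range (N + 1), (N.choose j : ℝ) * x ^ (N - j) := by
          have := Finset.sum_range_reflect
            (fun j => (N.choose (N - j) : ℝ) * x ^ j) (N + 1)
          simp only [Nat.add_sub_cancel] at this
          rw [← this]
          refine Finset.sum_congr rfl (fun j hj => ?_)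
          have hjN : j ≤ N := Nat.lt_succ_iff.1 (Finset.mem_range.1 hj)
          rw [Nat.sub_sub_self hjN]
  have hmin : ∑ j ∈ Finset.range (N + 1), (N.choose j : ℝ) * x ^ (min j (N - j))
      ≤ 2 * (1 + x) ^ N := by
    calc ∑ j ∈ Finset.range (N + 1), (N.choose j : ℝ) * x ^ (min j (N - j))
        ≤ ∑ j ∈ Finset.range (N + 1), ((N.choose j : ℝ) * x ^ j
            + (N.choose j : ℝ) * x ^ (N - j)) := by
          refine Finset.sum_le_sum (fun j hj => ?_)
          rcases le_total j (N - j) with hc' | hc'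
          · rw [min_eq_left hc']
            have : (0:ℝ) ≤ (N.choose j : ℝ) * x ^ (N - j) := by positivity
            linarith
          · rw [min_eq_right hc']
            have : (0:ℝ) ≤ (N.choose j : ℝ) * x ^ j := by positivity
            linarith
      _ = 2 * (1 + x) ^ N := by
          rw [Finset.sum_add_distrib, hbinom, hbinom2]
          ring
  calc Real.exp (-(2 * c)) * ∑ j ∈ Finset.range (N + 1),
        (N.choose j : ℝ) * x ^ (min j (N - j))
      ≤ Real.exp (-(2 * c)) * (2 * (1 + x) ^ N) :=
        mul_le_mul_of_nonneg_left hmin (Real.exp_pos _).le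
    _ = 2 * Real.exp (-2 * ε ^ 2 * lam ^ 2 * ((n : ℝ) - 2)) *
          (1 + Real.exp (-(ε ^ 2) * lam ^ 2 * ((n : ℝ) - 2))) ^ (n - 2) := by
        rw [hxdef, hcdef, hqdef]
        have h1 : -(2 * (ε ^ 2 * lam ^ 2 * ((n : ℝ) - 2)))
            = -2 * ε ^ 2 * lam ^ 2 * ((n : ℝ) - 2) := by ring
        have h2 : -(ε ^ 2 * lam ^ 2 * ((n : ℝ) - 2))
            = -(ε ^ 2) * lam ^ 2 * ((n : ℝ) - 2) := by ring
        rw [h1, h2]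
        ring
end

section
/- Let V be a finite set of n ≥ 4 vertices carrying a random graph as in the context, let s ≠ t be vertices of V, let λ ∈ (0,1], and suppose that P(C_{a,b} = 1) ≥ λ for every unordered pair {a,b} of distinct vertices and that the random graph has the independence-in-cut property for (s,t). Let c_min = min over s-t cuts S of E[C(S)], and let C_{s;t} = min over s-t cuts S of C(S). Then for every real ε > 0, P( C_{s;t} ≤ (1−ε)·c_min ) ≤ 2·exp(−2·ε²·λ²·(n−2)) · (1 + exp(−ε²·λ²·(n−2)))^{n−2}. -/
open MeasureTheory ProbabilityTheory Finset

open Real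

/-- Hoeffding's lemma, Bernoulli case: the mgf of a `{0,1}` variable with mean `p`. -/
lemma bernoulli_mgf_le {p : ℝ} (hp0 : 0 ≤ p) (hp1 : p ≤ 1) (t : ℝ) :
    1 - p + p * Real.exp t ≤ Real.exp (t * p + t ^ 2 / 8) := by
  set D : ℝ → ℝ := fun u => 1 - p + p * Real.exp u with hD
  have hDpos : ∀ u, 0 < D u := by
    intro u
    rcases eq_or_lt_of_le hp0 with h | h
    · simp [hD, ← h]
    · have : 0 < p * Real.exp u := mul_pos h (exp_pos u)
      have : 0 ≤ 1 - p := by linarith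
      simp only [hD]; nlinarith [exp_pos u]
  set f : ℝ → ℝ := fun u => u * p + u ^ 2 / 8 - Real.log (D u) with hf
  set f' : ℝ → ℝ := fun u => p + u / 4 - p * Real.exp u / D u with hf'
  have hDd : ∀ u, HasDerivAt D (p * Real.exp u) u := by
    intro u
    exact ((Real.hasDerivAt_exp u).const_mul p).const_add (1 - p)
  have hfd : ∀ u, HasDerivAt f (f' u) u := by
    intro u
    have h1 : HasDerivAt (fun u : ℝ => u * p + u ^ 2 / 8) (p + 2 * u / 8) u := by
      have := ((hasDerivAt_id u).mul_const p).add
        (((hasDerivAt_id u).pow 2).div_const 8)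
      simp at this; exact this
    have h2 : HasDerivAt (fun u => Real.log (D u)) (p * Real.exp u / D u) u :=
      (hDd u).log (hDpos u).ne'
    have := h1.sub h2
    refine this.congr_deriv ?_
    simp [hf']; ring
  have hf'd : ∀ u, HasDerivAt f'
      (1 / 4 - (p * Real.exp u * D u - p * Real.exp u * (p * Real.exp u)) / (D u) ^ 2) u := by
    intro u
    have h1 : HasDerivAt (fun u : ℝ => p + u / 4) (1 / 4) u := by
      simpa using ((hasDerivAt_id u).div_const 4).const_add p
    have h2 : HasDerivAt (fun u => p * Real.exp u / D u)
        ((p * Real.exp u * D u - p * Real.exp u * (p * Real.exp u)) / (D u) ^ 2) u :=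
      ((Real.hasDerivAt_exp u).const_mul p).div (hDd u) (hDpos u).ne'
    exact h1.sub h2
  have hf'nonneg : ∀ u, 0 ≤ 1 / 4 -
      (p * Real.exp u * D u - p * Real.exp u * (p * Real.exp u)) / (D u) ^ 2 := by
    intro u
    rw [sub_nonneg, div_le_iff₀ (pow_pos (hDpos u) 2)]
    have gen : ∀ d e : ℝ, e * d - e * e ≤ 1 / 4 * d ^ 2 := by
      intro d e; nlinarith [sq_nonneg (d - 2 * e)]
    have := gen (D u) (p * Real.exp u)
    linarith
  have hf'mono : Monotone f' := by
    have : ∀ u, 0 ≤ deriv f' u := fun u => by rw [(hf'd u).deriv]; exact hf'nonneg u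
    exact monotone_of_deriv_nonneg (fun u => (hf'd u).differentiableAt) this
  have hf'0 : f' 0 = 0 := by simp [hf', hD]
  have hfcont : Continuous f := by
    have : Differentiable ℝ f := fun u => (hfd u).differentiableAt
    exact this.continuous
  have key : ∀ u, 0 ≤ f u := by
    intro u
    rcases le_total 0 u with h | h
    · have hfmono : MonotoneOn f (Set.Ici 0) := by
        refine monotoneOn_of_deriv_nonneg (convex_Ici 0) hfcont.continuousOn
          (fun x _ => (hfd x).differentiableAt.differentiableWithinAt) fun x hx => ?_
        rw [(hfd x).deriv, ← hf'0]
        exact hf'mono (le_of_lt (by simpa using hx))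
      have := hfmono (Set.self_mem_Ici) (Set.mem_Ici.2 h) h
      have hf0 : f 0 = 0 := by simp [hf, hD]
      linarith
    · have hfanti : AntitoneOn f (Set.Iic 0) := by
        refine antitoneOn_of_deriv_nonpos (convex_Iic 0) hfcont.continuousOn
          (fun x _ => (hfd x).differentiableAt.differentiableWithinAt) fun x hx => ?_
        rw [(hfd x).deriv, ← hf'0]
        exact hf'mono (le_of_lt (by simpa using hx))
      have := hfanti (Set.mem_Iic.2 h) (Set.self_mem_Iic) h
      have hf0 : f 0 = 0 := by simp [hf, hD]
      linarith
  have hlog : Real.log (D t) ≤ t * p + t ^ 2 / 8 := by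
    have := key t
    simp only [hf] at this
    linarith
  have := (Real.log_le_iff_le_exp (hDpos t)).1 hlog
  simpa [hD] using this

open MeasureTheory ProbabilityTheory Finset

section Hoeffding

variable {Ω : Type*} [MeasureSpace Ω] [IsProbabilityMeasure (volume : Measure Ω)]

lemma integrable_of01 {X : Ω → ℝ} (hX : Measurable X) (h01 : ∀ ω, X ω = 0 ∨ X ω = 1) :
    Integrable X volume := by
  refine (integrable_const (1 : ℝ)).mono' hX.aestronglyMeasurable (ae_of_all _ fun ω => ?_)
  rcases h01 ω with h | h <;> simp [h]

lemma integrable_exp_of01 {X : Ω → ℝ} (hX : Measurable X) (h01 : ∀ ω, X ω = 0 ∨ X ω = 1)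
    (t : ℝ) : Integrable (fun ω => Real.exp (t * X ω)) volume := by
  refine (integrable_const (Real.exp |t|)).mono'
    ((hX.const_mul t).exp).aestronglyMeasurable (ae_of_all _ fun ω => ?_)
  rw [Real.norm_eq_abs, abs_of_pos (Real.exp_pos _), Real.exp_le_exp]
  rcases h01 ω with h | h <;> simp [h, le_abs_self, abs_nonneg]

lemma mgf_of01 {X : Ω → ℝ} (hX : Measurable X) (h01 : ∀ ω, X ω = 0 ∨ X ω = 1) (t : ℝ) :
    mgf X volume t = 1 - (∫ ω, X ω) + (∫ ω, X ω) * Real.exp t := by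
  have hI := integrable_of01 hX h01
  have hpt : ∀ ω, Real.exp (t * X ω) = 1 - X ω + X ω * Real.exp t := by
    intro ω; rcases h01 ω with h | h <;> simp [h]
  calc mgf X volume t = ∫ ω, (1 - X ω + X ω * Real.exp t) := by
        unfold mgf; exact integral_congr_ae (ae_of_all _ hpt)
    _ = (∫ ω, (1 - X ω)) + ∫ ω, X ω * Real.exp t := by
        exact integral_add ((integrable_const 1).sub hI) (hI.mul_const _)
    _ = 1 - (∫ ω, X ω) + (∫ ω, X ω) * Real.exp t := by
        rw [integral_sub (integrable_const 1) hI, integral_mul_const, integral_const]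
        simp

omit [IsProbabilityMeasure (volume : Measure Ω)] in
lemma mean_of01_nonneg {X : Ω → ℝ} (h01 : ∀ ω, X ω = 0 ∨ X ω = 1) : 0 ≤ ∫ ω, X ω :=
  integral_nonneg fun ω => by rcases h01 ω with h | h <;> simp [h]

lemma mean_of01_le_one {X : Ω → ℝ} (hX : Measurable X) (h01 : ∀ ω, X ω = 0 ∨ X ω = 1) :
    (∫ ω, X ω) ≤ 1 := by
  calc (∫ ω, X ω) ≤ ∫ _ω, (1 : ℝ) := by
        refine integral_mono (integrable_of01 hX h01) (integrable_const 1) fun ω => ?_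
        rcases h01 ω with h | h <;> simp [h]
    _ = 1 := by simp

/-- Hoeffding's inequality (lower tail) for independent `{0,1}`-valued random variables. -/
lemma hoeffding01 {ι : Type*} [Fintype ι] (X : ι → Ω → ℝ)
    (hindep : iIndepFun X volume)
    (hmeas : ∀ i, Measurable (X i))
    (h01 : ∀ i ω, X i ω = 0 ∨ X i ω = 1)
    (hcard : 0 < Fintype.card ι)
    (c : ℝ) (hc : 0 ≤ c) :
    volume {ω | ∑ i, X i ω ≤ (∑ i, ∫ ω, X i ω) - c}
      ≤ ENNReal.ofReal (Real.exp (-2 * c ^ 2 / (Fintype.card ι : ℝ))) := by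
  set m : ℝ := (Fintype.card ι : ℝ) with hm_def
  have hm : 0 < m := by rw [hm_def]; exact_mod_cast hcard
  set t : ℝ := -4 * c / m with ht_def
  have ht : t ≤ 0 := div_nonpos_of_nonpos_of_nonneg (by linarith) hm.le
  have hInt : ∀ i, Integrable (fun ω => Real.exp (t * X i ω)) volume :=
    fun i => integrable_exp_of01 (hmeas i) (h01 i) t
  have hint_sum : Integrable (fun ω => Real.exp (t * (∑ i, X i) ω)) volume :=
    hindep.integrable_exp_mul_sum hmeas fun i _ => hInt i
  set P : ℝ := ∑ i, ∫ ω, X i ω with hP_def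
  have key := measure_le_le_exp_mul_mgf (μ := volume) (X := ∑ i, X i) (P - c) ht hint_sum
  have hprod : mgf (∑ i, X i) volume t ≤ Real.exp (t * P + m * t ^ 2 / 8) := by
    rw [hindep.mgf_sum hmeas Finset.univ]
    calc (∏ i, mgf (X i) volume t)
        ≤ ∏ i, Real.exp (t * (∫ ω, X i ω) + t ^ 2 / 8) := by
          refine Finset.prod_le_prod (fun i _ => mgf_nonneg) fun i _ => ?_
          rw [mgf_of01 (hmeas i) (h01 i)]
          exact bernoulli_mgf_le (mean_of01_nonneg (h01 i)) (mean_of01_le_one (hmeas i) (h01 i)) t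
      _ = Real.exp (∑ i, (t * (∫ ω, X i ω) + t ^ 2 / 8)) := (Real.exp_sum _ _).symm
      _ = Real.exp (t * P + m * t ^ 2 / 8) := by
          rw [Finset.sum_add_distrib, ← Finset.mul_sum, Finset.sum_const, Finset.card_univ,
            nsmul_eq_mul]
          rw [hP_def, hm_def]; ring
  have hexp : Real.exp (-t * (P - c)) * Real.exp (t * P + m * t ^ 2 / 8)
      = Real.exp (-2 * c ^ 2 / m) := by
    rw [← Real.exp_add]
    congr 1
    rw [ht_def]
    field_simp
    ring
  have hR : (volume {ω | (∑ i, X i) ω ≤ P - c}).toReal ≤ Real.exp (-2 * c ^ 2 / m) := by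
    calc (volume {ω | (∑ i, X i) ω ≤ P - c}).toReal
        ≤ Real.exp (-t * (P - c)) * mgf (∑ i, X i) volume t := key
      _ ≤ Real.exp (-t * (P - c)) * Real.exp (t * P + m * t ^ 2 / 8) := by
          exact mul_le_mul_of_nonneg_left hprod (Real.exp_pos _).le
      _ = Real.exp (-2 * c ^ 2 / m) := hexp
  have hset : {ω | ∑ i, X i ω ≤ P - c} = {ω | (∑ i, X i) ω ≤ P - c} := by
    simp [Finset.sum_apply]
  rw [hset]
  calc volume {ω | (∑ i, X i) ω ≤ P - c}
      = ENNReal.ofReal (volume {ω | (∑ i, X i) ω ≤ P - c}).toReal :=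
        (ENNReal.ofReal_toReal (measure_ne_top _ _)).symm
    _ ≤ ENNReal.ofReal (Real.exp (-2 * c ^ 2 / m)) := ENNReal.ofReal_le_ofReal hR

end Hoeffding

section Comb

open Finset

set_option maxHeartbeats 1000000 in
lemma cut_sum_bound {V : Type*} [Fintype V] [DecidableEq V] (s t : V) (hst : s ≠ t)
    (n : ℕ) (hn : Fintype.card V = n) (hn4 : 4 ≤ n) (y : ℝ) (hy : 0 ≤ y) :
    ∑ S ∈ Finset.univ.filter (fun S : Finset V => s ∈ S ∧ t ∉ S),
        Real.exp (-(2 * y) * ((S.card * Sᶜ.card : ℕ) : ℝ))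
      ≤ 2 * Real.exp (-2 * y * ((n : ℝ) - 2)) *
          (1 + Real.exp (-y * ((n : ℝ) - 2))) ^ (n - 2) := by
  classical
  set W : Finset V := Finset.univ \ {s, t} with hW
  have hsW : s ∉ W := by simp [hW]
  have htW : t ∉ W := by simp [hW]
  have hWcard : W.card = n - 2 := by
    rw [hW, Finset.card_sdiff_of_subset (by simp)]
    rw [Finset.card_univ, hn, Finset.card_insert_of_notMem (by simpa using hst),
      Finset.card_singleton]
  set N : ℕ := n - 2 with hN
  have hNr : ((N : ℕ) : ℝ) = (n : ℝ) - 2 := by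
    rw [hN, Nat.cast_sub (by omega)]; norm_num
  set x : ℝ := y * ((n : ℝ) - 2) with hx
  set r : ℝ := Real.exp (-x) with hr
  have hr0 : 0 ≤ r := (Real.exp_pos _).le
  -- reindex the sum by subsets of W
  have hre : ∑ S ∈ Finset.univ.filter (fun S : Finset V => s ∈ S ∧ t ∉ S),
        Real.exp (-(2 * y) * ((S.card * Sᶜ.card : ℕ) : ℝ))
      = ∑ T ∈ W.powerset,
        Real.exp (-(2 * y) * (((T.card + 1) * (n - (T.card + 1)) : ℕ) : ℝ)) := by
    refine Finset.sum_nbij' (fun S => S.erase s) (fun T => insert s T) ?_ ?_ ?_ ?_ ?_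
    · intro S hS
      simp only [Finset.mem_filter, Finset.mem_univ, true_and] at hS
      rw [Finset.mem_powerset]
      intro a ha
      have h' := Finset.mem_erase.1 ha
      simp only [hW, Finset.mem_sdiff, Finset.mem_univ, true_and, Finset.mem_insert,
        Finset.mem_singleton]
      push_neg
      exact ⟨h'.1, fun h => hS.2 (h ▸ h'.2)⟩
    · intro T hT
      rw [Finset.mem_powerset] at hT
      simp only [Finset.mem_filter, Finset.mem_univ, true_and]
      refine ⟨Finset.mem_insert_self _ _, ?_⟩
      intro h
      rcases Finset.mem_insert.1 h with h | h
      · exact hst h.symm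
      · exact htW (hT h)
    · intro S hS
      simp only [Finset.mem_filter, Finset.mem_univ, true_and] at hS
      exact Finset.insert_erase hS.1
    · intro T hT
      rw [Finset.mem_powerset] at hT
      exact Finset.erase_insert (fun h => hsW (hT h))
    · intro S hS
      simp only [Finset.mem_filter, Finset.mem_univ, true_and] at hS
      congr 2
      have h1 : (S.erase s).card + 1 = S.card := by
        rw [Finset.card_erase_of_mem hS.1]
        have : 1 ≤ S.card := Finset.card_pos.2 ⟨s, hS.1⟩
        omega
      rw [h1, Finset.card_compl, hn]
  rw [hre]
  -- termwise bound
  have hterm : ∀ T ∈ W.powerset,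
      Real.exp (-(2 * y) * (((T.card + 1) * (n - (T.card + 1)) : ℕ) : ℝ))
        ≤ Real.exp (-2 * y * ((n : ℝ) - 2)) *
            (r ^ T.card * 1 ^ (N - T.card) + 1 ^ T.card * r ^ (N - T.card)) := by
    intro T hT
    rw [Finset.mem_powerset] at hT
    have hjN : T.card ≤ N := hWcard ▸ Finset.card_le_card hT
    set j : ℕ := T.card with hj
    have hj1n : j + 1 ≤ n - 1 := by omega
    have hcast : (((j + 1) * (n - (j + 1)) : ℕ) : ℝ) = ((j : ℝ) + 1) * ((n : ℝ) - (j + 1)) := by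
      rw [Nat.cast_mul, Nat.cast_sub (by omega)]
      push_cast; ring
    have hcastNj : (((N - j : ℕ)) : ℝ) = ((n : ℝ) - 2) - j := by
      rw [Nat.cast_sub hjN, hNr]
    have hrj : r ^ j = Real.exp (-(x * j)) := by
      rw [hr, ← Real.exp_nat_mul]; ring_nf
    have hrNj : r ^ (N - j) = Real.exp (-(x * (((n : ℝ) - 2) - j))) := by
      rw [hr, ← Real.exp_nat_mul, hcastNj]; ring_nf
    have hjr0 : (0 : ℝ) ≤ (j : ℝ) := Nat.cast_nonneg j
    have hjrN : (j : ℝ) ≤ (n : ℝ) - 2 := by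
      have := hjN
      have : (j : ℝ) ≤ (N : ℝ) := Nat.cast_le.2 this
      rwa [hNr] at this
    simp only [one_pow, one_mul, mul_one]
    rw [hcast, hrj, hrNj, mul_add, ← Real.exp_add, ← Real.exp_add]
    set Nr : ℝ := (n : ℝ) - 2 with hNrr
    rcases le_total ((j : ℝ)) (Nr - j) with hc | hc
    · calc Real.exp (-(2 * y) * (((j : ℝ) + 1) * ((n : ℝ) - (j + 1))))
          ≤ Real.exp (-2 * y * Nr + -(x * j)) := by
            rw [Real.exp_le_exp, hx]
            have key : Nr * (j : ℝ) ≤ 2 * (((j : ℝ) + 1) * (Nr + 1 - j)) - 2 * Nr := by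
              nlinarith [mul_nonneg hjr0 (by linarith : (0:ℝ) ≤ Nr - 2 * j)]
            have hrw : (n : ℝ) - ((j : ℝ) + 1) = Nr + 1 - j := by rw [hNrr]; ring
            rw [hrw]
            nlinarith [mul_le_mul_of_nonneg_left key hy]
        _ ≤ Real.exp (-2 * y * Nr + -(x * j)) + Real.exp (-2 * y * Nr + -(x * (Nr - j))) := by
            nlinarith [Real.exp_pos (-2 * y * Nr + -(x * (Nr - j)))]
    · calc Real.exp (-(2 * y) * (((j : ℝ) + 1) * ((n : ℝ) - (j + 1))))
          ≤ Real.exp (-2 * y * Nr + -(x * (Nr - j))) := by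
            rw [Real.exp_le_exp, hx]
            have key : Nr * (Nr - (j : ℝ)) ≤ 2 * (((j : ℝ) + 1) * (Nr + 1 - j)) - 2 * Nr := by
              nlinarith [mul_nonneg (by linarith : (0:ℝ) ≤ Nr - j)
                (by linarith : (0:ℝ) ≤ 2 * j - Nr)]
            have hrw : (n : ℝ) - ((j : ℝ) + 1) = Nr + 1 - j := by rw [hNrr]; ring
            rw [hrw]
            nlinarith [mul_le_mul_of_nonneg_left key hy]
        _ ≤ Real.exp (-2 * y * Nr + -(x * j)) + Real.exp (-2 * y * Nr + -(x * (Nr - j))) := by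
            nlinarith [Real.exp_pos (-2 * y * Nr + -(x * j))]
  calc ∑ T ∈ W.powerset, Real.exp (-(2 * y) * (((T.card + 1) * (n - (T.card + 1)) : ℕ) : ℝ))
      ≤ ∑ T ∈ W.powerset, Real.exp (-2 * y * ((n : ℝ) - 2)) *
          (r ^ T.card * 1 ^ (N - T.card) + 1 ^ T.card * r ^ (N - T.card)) :=
        Finset.sum_le_sum hterm
    _ = Real.exp (-2 * y * ((n : ℝ) - 2)) *
          ((∑ T ∈ W.powerset, r ^ T.card * 1 ^ (W.card - T.card)) +
           (∑ T ∈ W.powerset, 1 ^ T.card * r ^ (W.card - T.card))) := by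
        rw [← Finset.mul_sum, Finset.sum_add_distrib, hWcard]
    _ = Real.exp (-2 * y * ((n : ℝ) - 2)) * ((r + 1) ^ W.card + (1 + r) ^ W.card) := by
        rw [Finset.sum_pow_mul_eq_add_pow, Finset.sum_pow_mul_eq_add_pow]
    _ = 2 * Real.exp (-2 * y * ((n : ℝ) - 2)) * (1 + r) ^ N := by
        rw [hWcard, add_comm r 1]; ring
    _ = 2 * Real.exp (-2 * y * ((n : ℝ) - 2)) * (1 + Real.exp (-y * ((n : ℝ) - 2))) ^ (n - 2) := by
        rw [hr, hx, ← hN]; ring_nf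

end Comb

section PerCut

open MeasureTheory ProbabilityTheory Finset

variable {Ω : Type*} [MeasureSpace Ω] [IsProbabilityMeasure (volume : Measure Ω)]

lemma mean_eq_measure {X : Ω → ℝ} (hX : Measurable X) (h01 : ∀ ω, X ω = 0 ∨ X ω = 1) :
    ∫ ω, X ω = (volume {ω | X ω = 1}).toReal := by
  have hA : MeasurableSet {ω | X ω = 1} := hX (measurableSet_singleton 1)
  have hXind : X = Set.indicator {ω | X ω = 1} (fun _ => (1 : ℝ)) := by
    funext ω
    rcases h01 ω with h | h
    · have : ω ∉ {ω | X ω = 1} := by simp [h]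
      simp [Set.indicator_apply, this, h]
    · have : ω ∈ {ω | X ω = 1} := by simp [h]
      simp [Set.indicator_apply, this, h]
  rw [hXind, integral_indicator_const (1 : ℝ) hA]
  simp [measureReal_def]

lemma mean_ge_lam {lam : ℝ} (hlam0 : 0 < lam) {X : Ω → ℝ} (hX : Measurable X)
    (h01 : ∀ ω, X ω = 0 ∨ X ω = 1)
    (hlow : ENNReal.ofReal lam ≤ volume {ω | X ω = 1}) :
    lam ≤ ∫ ω, X ω := by
  rw [mean_eq_measure hX h01]
  have := ENNReal.toReal_mono (measure_ne_top _ _) hlow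
  rwa [ENNReal.toReal_ofReal hlam0.le] at this

lemma cut_hoeffding {V : Type*} [Fintype V] [DecidableEq V]
    (lam : ℝ) (hlam0 : 0 < lam)
    (C : V → V → Ω → ℝ) (hmeas : ∀ a b, Measurable (C a b))
    (h01 : ∀ a b ω, C a b ω = 0 ∨ C a b ω = 1)
    (hlow : ∀ a b : V, a ≠ b → ENNReal.ofReal lam ≤ volume {ω | C a b ω = 1})
    (s t : V) (S : Finset V) (hsS : s ∈ S) (htS : t ∉ S)
    (hind : iIndepFun
      (fun p : (S ×ˢ Sᶜ : Finset (V × V)) => C (p : V × V).1 (p : V × V).2) volume)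
    (ε : ℝ) (hε : 0 < ε) (hε1 : ε ≤ 1) :
    volume {ω | cutCap C S ω ≤ (1 - ε) * ∫ ω, cutCap C S ω}
      ≤ ENNReal.ofReal (Real.exp (-(2 * (ε ^ 2 * lam ^ 2)) * ((S.card * Sᶜ.card : ℕ) : ℝ))) := by
  classical
  set X : ((S ×ˢ Sᶜ : Finset (V × V)) : Type _) → Ω → ℝ :=
    fun p => C (p : V × V).1 (p : V × V).2 with hX
  have hXmeas : ∀ i, Measurable (X i) := fun i => hmeas _ _
  have hX01 : ∀ i ω, X i ω = 0 ∨ X i ω = 1 := fun i ω => h01 _ _ ω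
  have hXint : ∀ i, Integrable (X i) volume := fun i =>
    integrable_of01 (hXmeas i) (hX01 i)
  have hne : ∀ i : ((S ×ˢ Sᶜ : Finset (V × V)) : Type _),
      ((i : V × V).1 : V) ≠ (i : V × V).2 := by
    intro i h
    have hm := Finset.mem_product.1 i.2
    exact (Finset.mem_compl.1 hm.2) (h ▸ hm.1)
  have hmean : ∀ i, lam ≤ ∫ ω, X i ω := fun i =>
    mean_ge_lam hlam0 (hXmeas i) (hX01 i) (hlow _ _ (hne i))
  have hcard : Fintype.card ((S ×ˢ Sᶜ : Finset (V × V)) : Type _) = S.card * Sᶜ.card := by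
    rw [Fintype.card_coe, Finset.card_product]
  have hcardpos : 0 < Fintype.card ((S ×ˢ Sᶜ : Finset (V × V)) : Type _) := by
    rw [hcard]
    exact Nat.mul_pos (Finset.card_pos.2 ⟨s, hsS⟩)
      (Finset.card_pos.2 ⟨t, Finset.mem_compl.2 htS⟩)
  set m : ℝ := ((S.card * Sᶜ.card : ℕ) : ℝ) with hm_def
  have hm : 0 < m := by
    rw [hm_def]
    exact_mod_cast hcard ▸ hcardpos
  have hsum : ∀ ω, cutCap C S ω = ∑ i, X i ω := by
    intro ω
    rw [cutCap, ← Finset.sum_product' (f := fun a b => C a b ω)]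
    exact (Finset.sum_coe_sort (S ×ˢ Sᶜ) (fun p => C p.1 p.2 ω)).symm
  set μS : ℝ := ∫ ω, cutCap C S ω with hμS
  have hmu : μS = ∑ i, ∫ ω, X i ω := by
    rw [hμS]
    calc ∫ ω, cutCap C S ω = ∫ ω, ∑ i, X i ω := integral_congr_ae (ae_of_all _ hsum)
      _ = ∑ i, ∫ ω, X i ω := integral_finset_sum _ fun i _ => hXint i
  have hμlam : lam * m ≤ μS := by
    rw [hmu]
    calc lam * m = ∑ _i : ((S ×ˢ Sᶜ : Finset (V × V)) : Type _), lam := by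
          rw [Finset.sum_const, Finset.card_univ, nsmul_eq_mul, hm_def]
          rw [← hcard]; ring
      _ ≤ ∑ i, ∫ ω, X i ω := Finset.sum_le_sum fun i _ => hmean i
  have hμpos : 0 < μS := lt_of_lt_of_le (mul_pos hlam0 hm) hμlam
  set c : ℝ := ε * μS with hc_def
  have hc : 0 ≤ c := mul_nonneg hε.le hμpos.le
  have hset : {ω | cutCap C S ω ≤ (1 - ε) * μS}
      = {ω | ∑ i, X i ω ≤ (∑ i, ∫ ω, X i ω) - c} := by
    ext ω
    rw [Set.mem_setOf_eq, Set.mem_setOf_eq, hsum ω, ← hmu]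
    constructor <;> intro h <;> [linarith [h]; linarith [h]] 
  calc volume {ω | cutCap C S ω ≤ (1 - ε) * μS}
      ≤ ENNReal.ofReal (Real.exp (-2 * c ^ 2 /
          (Fintype.card ((S ×ˢ Sᶜ : Finset (V × V)) : Type _) : ℝ))) := by
        rw [hset]
        exact hoeffding01 X hind hXmeas hX01 hcardpos c hc
    _ ≤ ENNReal.ofReal (Real.exp (-(2 * (ε ^ 2 * lam ^ 2)) * m)) := by
        apply ENNReal.ofReal_le_ofReal
        rw [Real.exp_le_exp]
        have hcm : (Fintype.card ((S ×ˢ Sᶜ : Finset (V × V)) : Type _) : ℝ) = m := by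
          rw [hm_def, hcard]
        rw [hcm, div_le_iff₀ hm, hc_def]
        have hsq : (lam * m) * (lam * m) ≤ μS * μS :=
          mul_self_le_mul_self (mul_pos hlam0 hm).le hμlam
        nlinarith [mul_le_mul_of_nonneg_left hsq (sq_nonneg ε)]

end PerCut
section Main

open MeasureTheory ProbabilityTheory Finset

lemma cutCap_nonneg {V Ω : Type*} [Fintype V] [DecidableEq V]
    (C : V → V → Ω → ℝ) (h01 : ∀ a b ω, C a b ω = 0 ∨ C a b ω = 1)
    (S : Finset V) (ω : Ω) : 0 ≤ cutCap C S ω := by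
  refine Finset.sum_nonneg fun a _ => Finset.sum_nonneg fun b _ => ?_
  rcases h01 a b ω with h | h <;> simp [h]

lemma cut_mean_pos {V Ω : Type*} [Fintype V] [DecidableEq V] [MeasureSpace Ω]
    [IsProbabilityMeasure (volume : Measure Ω)]
    (lam : ℝ) (hlam0 : 0 < lam)
    (C : V → V → Ω → ℝ) (hmeas : ∀ a b, Measurable (C a b))
    (h01 : ∀ a b ω, C a b ω = 0 ∨ C a b ω = 1)
    (hlow : ∀ a b : V, a ≠ b → ENNReal.ofReal lam ≤ volume {ω | C a b ω = 1})
    (s t : V) (S : Finset V) (hsS : s ∈ S) (htS : t ∉ S) :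
    0 < ∫ ω, cutCap C S ω := by
  have hint : ∀ a b : V, Integrable (C a b) volume := fun a b =>
    integrable_of01 (hmeas a b) (h01 a b)
  have heq : ∫ ω, cutCap C S ω = ∑ a ∈ S, ∑ b ∈ Sᶜ, ∫ ω, C a b ω := by
    calc ∫ ω, cutCap C S ω = ∑ a ∈ S, ∫ ω, ∑ b ∈ Sᶜ, C a b ω :=
          integral_finset_sum _ fun a _ => integrable_finset_sum _ fun b _ => hint a b
      _ = ∑ a ∈ S, ∑ b ∈ Sᶜ, ∫ ω, C a b ω :=
          Finset.sum_congr rfl fun a _ => integral_finset_sum _ fun b _ => hint a b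
  have hnn : ∀ a b : V, 0 ≤ ∫ ω, C a b ω := fun a b => mean_of01_nonneg (h01 a b)
  have htc : t ∈ Sᶜ := Finset.mem_compl.2 htS
  have hst' : s ≠ t := fun h => htS (h ▸ hsS)
  have h1 : lam ≤ ∫ ω, C s t ω :=
    mean_ge_lam hlam0 (hmeas s t) (h01 s t) (hlow s t hst')
  have h2 : (∫ ω, C s t ω) ≤ ∑ b ∈ Sᶜ, ∫ ω, C s b ω :=
    Finset.single_le_sum (fun b _ => hnn s b) htc
  have h3 : (∑ b ∈ Sᶜ, ∫ ω, C s b ω) ≤ ∑ a ∈ S, ∑ b ∈ Sᶜ, ∫ ω, C a b ω :=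
    Finset.single_le_sum (fun a _ => Finset.sum_nonneg fun b _ => hnn a b) hsS
  rw [heq]; linarith

/-- paper's Corollary 5. With `c_min` the minimum expected cut value and
`C_{s;t}` the (random) minimum cut between `s` and `t`,
`P(C_{s;t} ≤ (1-ε) c_min) ≤ 2 exp(-2 ε² λ² (n-2)) (1 + exp(-ε² λ² (n-2)))^{n-2}`. -/
theorem stmt_3 {V Ω : Type*} [Fintype V] [DecidableEq V] [MeasureSpace Ω]
    [IsProbabilityMeasure (volume : Measure Ω)]
    (n : ℕ) (hn : Fintype.card V = n) (hn4 : 4 ≤ n)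
    (s t : V) (hst : s ≠ t)
    (lam : ℝ) (hlam0 : 0 < lam) (hlam1 : lam ≤ 1)
    (C : V → V → Ω → ℝ)
    (hsymm : ∀ a b, C a b = C b a)
    (hmeas : ∀ a b, Measurable (C a b))
    (h01 : ∀ a b ω, C a b ω = 0 ∨ C a b ω = 1)
    (hlow : ∀ a b : V, a ≠ b → ENNReal.ofReal lam ≤ volume {ω | C a b ω = 1})
    (hindep : IndepInCut C s t)
    (cmin : ℝ)
    (hcmin : cmin = sInf {x : ℝ | ∃ S : Finset V, s ∈ S ∧ t ∉ S ∧
        x = ∫ ω, cutCap C S ω})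
    (ε : ℝ) (hε : 0 < ε) :
    volume {ω | sInf {x : ℝ | ∃ S : Finset V, s ∈ S ∧ t ∉ S ∧ x = cutCap C S ω}
          ≤ (1 - ε) * cmin}
      ≤ ENNReal.ofReal (2 * Real.exp (-2 * ε ^ 2 * lam ^ 2 * ((n : ℝ) - 2)) *
          (1 + Real.exp (-(ε ^ 2) * lam ^ 2 * ((n : ℝ) - 2))) ^ (n - 2)) := by
  classical
  have hts : t ∉ ({s} : Finset V) := by simp [Ne.symm hst]
  -- facts about cmin
  set Aexp : Set ℝ := {x : ℝ | ∃ S : Finset V, s ∈ S ∧ t ∉ S ∧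
      x = ∫ ω, cutCap C S ω} with hAexp
  have hAfin : Aexp.Finite := by
    refine (Set.finite_range (fun S : Finset V => ∫ ω, cutCap C S ω)).subset ?_
    rintro x ⟨S, _, _, rfl⟩; exact ⟨S, rfl⟩
  have hAne : Aexp.Nonempty := ⟨_, {s}, Finset.mem_singleton_self s, hts, rfl⟩
  have hcmin_le : ∀ S : Finset V, s ∈ S → t ∉ S → cmin ≤ ∫ ω, cutCap C S ω := by
    intro S h1 h2
    rw [hcmin]
    exact csInf_le hAfin.bddBelow ⟨S, h1, h2, rfl⟩
  obtain ⟨S₀, hS₀s, hS₀t, hS₀⟩ : ∃ S : Finset V, s ∈ S ∧ t ∉ S ∧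
      cmin = ∫ ω, cutCap C S ω := by
    have h := hAne.csInf_mem hAfin
    rw [← hcmin] at h
    exact h
  have hcminpos : 0 < cmin := by
    rw [hS₀]
    exact cut_mean_pos lam hlam0 C hmeas h01 hlow s t S₀ hS₀s hS₀t
  -- the random min cut attains its value at some cut
  have hmem : ∀ ω : Ω, ∃ S : Finset V, s ∈ S ∧ t ∉ S ∧
      sInf {x : ℝ | ∃ S : Finset V, s ∈ S ∧ t ∉ S ∧ x = cutCap C S ω} = cutCap C S ω := by
    intro ω
    have hfin : {x : ℝ | ∃ S : Finset V, s ∈ S ∧ t ∉ S ∧ x = cutCap C S ω}.Finite := by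
      refine (Set.finite_range (fun S : Finset V => cutCap C S ω)).subset ?_
      rintro x ⟨S, _, _, rfl⟩; exact ⟨S, rfl⟩
    have hne : {x : ℝ | ∃ S : Finset V, s ∈ S ∧ t ∉ S ∧ x = cutCap C S ω}.Nonempty :=
      ⟨_, {s}, Finset.mem_singleton_self s, hts, rfl⟩
    exact hne.csInf_mem hfin
  rcases le_or_gt ε 1 with hε1 | hε1
  · -- main case: union bound + Hoeffding + counting
    set 𝒮 : Finset (Finset V) := Finset.univ.filter (fun S : Finset V => s ∈ S ∧ t ∉ S)
      with h𝒮
    have hsub : {ω | sInf {x : ℝ | ∃ S : Finset V, s ∈ S ∧ t ∉ S ∧ x = cutCap C S ω}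
          ≤ (1 - ε) * cmin}
        ⊆ ⋃ S ∈ 𝒮, {ω | cutCap C S ω ≤ (1 - ε) * ∫ ω', cutCap C S ω'} := by
      intro ω hω
      simp only [Set.mem_setOf_eq] at hω
      obtain ⟨S, h1, h2, hEq⟩ := hmem ω
      have hSmem : S ∈ 𝒮 := by simp [h𝒮, h1, h2]
      refine Set.mem_biUnion hSmem ?_
      have : (1 - ε) * cmin ≤ (1 - ε) * ∫ ω', cutCap C S ω' :=
        mul_le_mul_of_nonneg_left (hcmin_le S h1 h2) (by linarith)
      exact Set.mem_setOf_eq ▸ by rw [← hEq]; linarith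
    calc volume {ω | sInf {x : ℝ | ∃ S : Finset V, s ∈ S ∧ t ∉ S ∧ x = cutCap C S ω}
          ≤ (1 - ε) * cmin}
        ≤ volume (⋃ S ∈ 𝒮, {ω | cutCap C S ω ≤ (1 - ε) * ∫ ω', cutCap C S ω'}) :=
          measure_mono hsub
      _ ≤ ∑ S ∈ 𝒮, volume {ω | cutCap C S ω ≤ (1 - ε) * ∫ ω', cutCap C S ω'} :=
          measure_biUnion_finset_le 𝒮 _
      _ ≤ ∑ S ∈ 𝒮, ENNReal.ofReal
            (Real.exp (-(2 * (ε ^ 2 * lam ^ 2)) * ((S.card * Sᶜ.card : ℕ) : ℝ))) := by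
          refine Finset.sum_le_sum fun S hS => ?_
          simp only [h𝒮, Finset.mem_filter, Finset.mem_univ, true_and] at hS
          exact cut_hoeffding lam hlam0 C hmeas h01 hlow s t S hS.1 hS.2
            (hindep S hS.1 hS.2) ε hε hε1
      _ = ENNReal.ofReal (∑ S ∈ 𝒮,
            Real.exp (-(2 * (ε ^ 2 * lam ^ 2)) * ((S.card * Sᶜ.card : ℕ) : ℝ))) :=
          (ENNReal.ofReal_sum_of_nonneg fun _ _ => (Real.exp_pos _).le).symm
      _ ≤ ENNReal.ofReal (2 * Real.exp (-2 * (ε ^ 2 * lam ^ 2) * ((n : ℝ) - 2)) *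
            (1 + Real.exp (-(ε ^ 2 * lam ^ 2) * ((n : ℝ) - 2))) ^ (n - 2)) :=
          ENNReal.ofReal_le_ofReal
            (cut_sum_bound s t hst n hn hn4 (ε ^ 2 * lam ^ 2) (by positivity))
      _ = ENNReal.ofReal (2 * Real.exp (-2 * ε ^ 2 * lam ^ 2 * ((n : ℝ) - 2)) *
            (1 + Real.exp (-(ε ^ 2) * lam ^ 2 * ((n : ℝ) - 2))) ^ (n - 2)) := by
          rw [show -2 * (ε ^ 2 * lam ^ 2) * ((n : ℝ) - 2)
              = -2 * ε ^ 2 * lam ^ 2 * ((n : ℝ) - 2) by ring,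
            show -(ε ^ 2 * lam ^ 2) * ((n : ℝ) - 2)
              = -(ε ^ 2) * lam ^ 2 * ((n : ℝ) - 2) by ring]
  · -- ε > 1 : the event is empty
    have hempty : {ω | sInf {x : ℝ | ∃ S : Finset V, s ∈ S ∧ t ∉ S ∧ x = cutCap C S ω}
          ≤ (1 - ε) * cmin} = ∅ := by
      ext ω
      simp only [Set.mem_setOf_eq, Set.mem_empty_iff_false, iff_false, not_le]
      obtain ⟨S, h1, h2, hEq⟩ := hmem ω
      rw [hEq]
      have h0 : 0 ≤ cutCap C S ω := cutCap_nonneg C h01 S ω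
      nlinarith
    rw [hempty]
    simp


end Main
end

section
/- Let V be a finite set of n ≥ 4 vertices carrying a random graph as in the context, let s ∈ V be a source, let T ⊆ V∖{s} be a nonempty set of α terminals, and let λ ∈ (0,1]. Suppose P(C_{a,b} = 1) ≥ λ for every unordered pair {a,b} of distinct vertices, and that for every t ∈ T the random graph has the independence-in-cut property for (s,t). Assume λ²·(n−2) > ln(n−2), let d be a real with 1 < d < λ²·(n−2)/ln(n−2), and set ε = sqrt( d·ln(n−2) / (λ²·(n−2)) ). Then P( C_{s;T} ≥ (1+ε)·c_min ) ≤ (n−2)^{−2d}. -/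
open MeasureTheory ProbabilityTheory Finset

section AuxHoeffding
open Real

lemma bern_mgf_le {q : ℝ} (hq0 : 0 ≤ q) (hq1 : q ≤ 1) {t : ℝ} (ht : 0 ≤ t) :
    1 - q + q * exp t ≤ exp (t * q + t ^ 2 / 8) := by
  -- denominator positivity
  have hden : ∀ u : ℝ, 0 < 1 - q + q * exp u := by
    intro u
    rcases lt_or_eq_of_le hq1 with h | h
    · have : 0 ≤ q * exp u := mul_nonneg hq0 (exp_pos u).le
      linarith
    · subst h; simpa using exp_pos u
  set h : ℝ → ℝ := fun u => u * q + u ^ 2 / 8 - log (1 - q + q * exp u) with hh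
  set h' : ℝ → ℝ := fun u => q + u / 4 - q * exp u / (1 - q + q * exp u) with hh'
  have hder : ∀ u : ℝ, HasDerivAt h (h' u) u := by
    intro u
    have h1 : HasDerivAt (fun v : ℝ => 1 - q + q * exp v) (q * exp u) u :=
      ((hasDerivAt_exp u).const_mul q).const_add (1 - q)
    have h2 : HasDerivAt (fun v : ℝ => log (1 - q + q * exp v))
        (q * exp u / (1 - q + q * exp u)) u := h1.log (hden u).ne'
    have h3 : HasDerivAt (fun v : ℝ => v * q + v ^ 2 / 8) (q + u * 2 / 8 * 1) u := by
      have := ((hasDerivAt_id u).mul_const q).add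
        (((hasDerivAt_pow 2 u)).div_const 8)
      simpa [mul_comm, Pi.add_def] using this
    have := h3.sub h2
    refine this.congr_deriv ?_
    simp only [hh']
    ring
  have hder' : ∀ u : ℝ, HasDerivAt h'
      (1 / 4 - q * exp u * (1 - q) / (1 - q + q * exp u) ^ 2) u := by
    intro u
    have h1 : HasDerivAt (fun v : ℝ => 1 - q + q * exp v) (q * exp u) u :=
      ((hasDerivAt_exp u).const_mul q).const_add (1 - q)
    have h2 : HasDerivAt (fun v : ℝ => q * exp v) (q * exp u) u :=
      (hasDerivAt_exp u).const_mul q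
    have h3 : HasDerivAt (fun v : ℝ => q * exp v / (1 - q + q * exp v))
        ((q * exp u * (1 - q + q * exp u) - q * exp u * (q * exp u)) /
          (1 - q + q * exp u) ^ 2) u := h2.div h1 (hden u).ne'
    have h4 : HasDerivAt (fun v : ℝ => q + v / 4) (1 / 4) u := by
      simpa using ((hasDerivAt_id u).div_const 4).const_add q
    have := h4.sub h3
    refine this.congr_deriv ?_
    field_simp
    ring
  have hsecond : ∀ u : ℝ, 0 ≤ 1 / 4 - q * exp u * (1 - q) / (1 - q + q * exp u) ^ 2 := by
    intro u
    rw [sub_nonneg, div_le_iff₀ (pow_pos (hden u) 2)]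
    nlinarith [sq_nonneg ((1 - q) - q * exp u), (hden u).le]
  -- h' is monotone, h' 0 = 0, so h' ≥ 0 on [0,∞); then h monotone on [0,∞); h 0 = 0
  have hmono' : MonotoneOn h' (Set.Ici (0 : ℝ)) := by
    refine monotoneOn_of_deriv_nonneg (convex_Ici 0)
      (fun u _ => (hder' u).differentiableAt.continuousAt.continuousWithinAt)
      (fun u _ => (hder' u).differentiableAt.differentiableWithinAt) ?_
    intro u _
    rw [(hder' u).deriv]
    exact hsecond u
  have h'0 : h' 0 = 0 := by simp [hh']
  have h'nonneg : ∀ u ∈ Set.Ici (0 : ℝ), 0 ≤ h' u := by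
    intro u hu
    have := hmono' (Set.self_mem_Ici) hu hu
    rwa [h'0] at this
  have hmono : MonotoneOn h (Set.Ici (0 : ℝ)) := by
    refine monotoneOn_of_deriv_nonneg (convex_Ici 0)
      (fun u _ => (hder u).differentiableAt.continuousAt.continuousWithinAt)
      (fun u _ => (hder u).differentiableAt.differentiableWithinAt) ?_
    intro u hu
    rw [(hder u).deriv]
    exact h'nonneg u (interior_subset hu)
  have h0 : h 0 = 0 := by simp [hh]
  have hge : 0 ≤ h t := by
    have := hmono Set.self_mem_Ici ht ht
    rwa [h0] at this
  have : log (1 - q + q * exp t) ≤ t * q + t ^ 2 / 8 := by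
    simp only [hh, sub_nonneg] at hge; linarith
  calc 1 - q + q * exp t = exp (log (1 - q + q * exp t)) := (exp_log (hden t)).symm
    _ ≤ exp (t * q + t ^ 2 / 8) := exp_le_exp.mpr this

end AuxHoeffding

section AuxHoeffding2
open Real

lemma hoeffding_aux {Ω : Type*} [MeasureSpace Ω] [IsProbabilityMeasure (volume : Measure Ω)]
    {ι : Type*} [Fintype ι] (X : ι → Ω → ℝ)
    (hmeas : ∀ i, Measurable (X i))
    (h01 : ∀ i ω, X i ω = 0 ∨ X i ω = 1)
    (hindep : iIndepFun X volume)
    (m : ℕ) (hm : Fintype.card ι = m) (hm0 : 0 < m)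
    (s : ℝ) (hs : 0 < s) :
    volume {ω | (∑ i, ∫ ω', X i ω') + s ≤ ∑ i, X i ω} ≤
      ENNReal.ofReal (exp (-(2 * s ^ 2 / m))) := by
  have hm0' : (0 : ℝ) < m := by exact_mod_cast hm0
  set t : ℝ := 4 * s / m with htdef
  have ht : 0 < t := by positivity
  -- bounds on X i
  have hXle : ∀ i ω, 0 ≤ X i ω ∧ X i ω ≤ 1 := by
    intro i ω; rcases h01 i ω with h | h <;> simp [h]
  have hint : ∀ i, Integrable (X i) (volume : Measure Ω) := by
    intro i
    refine (integrable_const (1 : ℝ)).mono' (hmeas i).aestronglyMeasurable ?_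
    filter_upwards with ω
    rw [Real.norm_eq_abs, abs_le]
    constructor <;> [linarith [(hXle i ω).1]; exact (hXle i ω).2]
  have hexpint : ∀ i, Integrable (fun ω => exp (t * X i ω)) (volume : Measure Ω) := by
    intro i
    refine (integrable_const (exp t)).mono' (((hmeas i).const_mul t).exp).aestronglyMeasurable ?_
    filter_upwards with ω
    rw [Real.norm_eq_abs, abs_of_pos (exp_pos _), exp_le_exp]
    nlinarith [(hXle i ω).2, ht.le]
  -- mean
  set q : ι → ℝ := fun i => ∫ ω', X i ω' with hq
  have hq01 : ∀ i, 0 ≤ q i ∧ q i ≤ 1 := by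
    intro i
    constructor
    · exact integral_nonneg fun ω => (hXle i ω).1
    · calc ∫ ω', X i ω' ≤ ∫ _ω', (1 : ℝ) := by
            exact integral_mono (hint i) (integrable_const 1) fun ω => (hXle i ω).2
        _ = 1 := by simp
  -- per-variable mgf
  have hmgf : ∀ i, mgf (X i) volume t ≤ exp (t * q i + t ^ 2 / 8) := by
    intro i
    have hpt : ∀ ω, exp (t * X i ω) = 1 + (exp t - 1) * X i ω := by
      intro ω; rcases h01 i ω with h | h <;> simp [h]
    have : mgf (X i) volume t = 1 - q i + q i * exp t := by
      rw [mgf]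
      simp only [hpt]
      rw [integral_add (integrable_const 1) ((hint i).const_mul _), integral_const,
        integral_const_mul]
      simp [hq]; ring
    rw [this]
    exact bern_mgf_le (hq01 i).1 (hq01 i).2 ht.le
  -- sum mgf
  have hsum_eq : ∀ ω, (∑ i, X i) ω = ∑ i, X i ω := by intro ω; simp
  have hmgfsum : mgf (∑ i, X i) volume t ≤ exp (t * (∑ i, q i) + m * (t ^ 2 / 8)) := by
    rw [hindep.mgf_sum hmeas]
    calc ∏ i, mgf (X i) volume t ≤ ∏ i, exp (t * q i + t ^ 2 / 8) :=
          Finset.prod_le_prod (fun i _ => mgf_nonneg) (fun i _ => hmgf i)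
      _ = exp (∑ i, (t * q i + t ^ 2 / 8)) := by rw [← Real.exp_sum]
      _ = exp (t * (∑ i, q i) + m * (t ^ 2 / 8)) := by
          rw [Finset.sum_add_distrib, Finset.sum_const, Finset.card_univ, hm,
            nsmul_eq_mul, Finset.mul_sum]
  -- Chernoff
  have hintsum : Integrable (fun ω => exp (t * (∑ i, X i) ω)) (volume : Measure Ω) :=
    hindep.integrable_exp_mul_sum hmeas (fun i _ => hexpint i)
  have hcher := measure_ge_le_exp_mul_mgf (X := ∑ i, X i) (μ := volume)
    ((∑ i, q i) + s) ht.le hintsum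
  have hfin : volume {ω | (∑ i, q i) + s ≤ (∑ i, X i) ω} ≠ ⊤ := measure_ne_top _ _
  have key : (volume {ω | (∑ i, q i) + s ≤ (∑ i, X i) ω}).toReal ≤ exp (-(2 * s ^ 2 / m)) := by
    refine hcher.trans ?_
    calc exp (-t * ((∑ i, q i) + s)) * mgf (∑ i, X i) volume t
        ≤ exp (-t * ((∑ i, q i) + s)) * exp (t * (∑ i, q i) + m * (t ^ 2 / 8)) := by
          exact mul_le_mul_of_nonneg_left hmgfsum (exp_pos _).le
      _ = exp (-t * s + m * t ^ 2 / 8) := by rw [← Real.exp_add]; ring_nf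
      _ = exp (-(2 * s ^ 2 / m)) := by
          congr 1
          rw [htdef]
          field_simp
          ring
  have := (ENNReal.le_ofReal_iff_toReal_le hfin (exp_pos _).le).2 key
  convert this using 3
  ext ω
  simp [hsum_eq]

end AuxHoeffding2

/-- upper-tail half of the paper's Theorem 1.
`P(C_{s;T} ≥ (1+ε) c_min) ≤ (n-2)^{-2d}` where `ε = sqrt(d ln(n-2) / (λ² (n-2)))`. -/
theorem stmt_5 {V Ω : Type*} [Fintype V] [DecidableEq V] [MeasureSpace Ω]
    [IsProbabilityMeasure (volume : Measure Ω)]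
    (n : ℕ) (hn : Fintype.card V = n) (hn4 : 4 ≤ n)
    (s : V) (T : Finset V) (hT : T.Nonempty) (hsT : s ∉ T)
    (α : ℕ) (hα : α = T.card)
    (lam : ℝ) (hlam0 : 0 < lam) (hlam1 : lam ≤ 1)
    (C : V → V → Ω → ℝ)
    (hsymm : ∀ a b, C a b = C b a)
    (hmeas : ∀ a b, Measurable (C a b))
    (h01 : ∀ a b ω, C a b ω = 0 ∨ C a b ω = 1)
    (hlow : ∀ a b : V, a ≠ b → ENNReal.ofReal lam ≤ volume {ω | C a b ω = 1})
    (hindep : ∀ t ∈ T, IndepInCut C s t)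
    (hln : Real.log ((n : ℝ) - 2) < lam ^ 2 * ((n : ℝ) - 2))
    (d : ℝ) (hd1 : 1 < d) (hd2 : d < lam ^ 2 * ((n : ℝ) - 2) / Real.log ((n : ℝ) - 2))
    (ε : ℝ) (hε : ε = Real.sqrt (d * Real.log ((n : ℝ) - 2) / (lam ^ 2 * ((n : ℝ) - 2))))
    (cmin : ℝ)
    (hcmin : cmin = sInf {x : ℝ | ∃ t ∈ T, ∃ S : Finset V, s ∈ S ∧ t ∉ S ∧
        x = ∫ ω, cutCap C S ω}) :
    volume {ω | (1 + ε) * cmin ≤ sInf {x : ℝ | ∃ t ∈ T, ∃ S : Finset V, s ∈ S ∧ t ∉ S ∧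
          x = cutCap C S ω}}
      ≤ ENNReal.ofReal (((n : ℝ) - 2) ^ (-(2 * d))) := by
  have hn2 : (2 : ℝ) ≤ (n : ℝ) - 2 := by
    have : (4 : ℝ) ≤ (n : ℝ) := by exact_mod_cast hn4
    linarith
  have hlogpos : 0 < Real.log ((n : ℝ) - 2) := Real.log_pos (by linarith)
  have hdpos : (0 : ℝ) < d := by linarith
  have hεpos : 0 < ε := by
    rw [hε]; apply Real.sqrt_pos.2; positivity
  have hε2 : ε ^ 2 * (lam ^ 2 * ((n : ℝ) - 2)) = d * Real.log ((n : ℝ) - 2) := by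
    rw [hε, Real.sq_sqrt (by positivity)]
    field_simp
  -- cmin is attained at some cut S₀ for some t₁
  obtain ⟨t₀, ht₀⟩ := hT
  have hst₀ : s ≠ t₀ := fun h => hsT (h ▸ ht₀)
  have hfinS : ({x : ℝ | ∃ t ∈ T, ∃ S : Finset V, s ∈ S ∧ t ∉ S ∧
      x = ∫ ω, cutCap C S ω}).Finite := by
    apply Set.Finite.subset (Set.finite_range (fun S : Finset V => ∫ ω, cutCap C S ω))
    rintro x ⟨t, _, S, _, _, rfl⟩
    exact ⟨S, rfl⟩
  have hneS : ({x : ℝ | ∃ t ∈ T, ∃ S : Finset V, s ∈ S ∧ t ∉ S ∧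
      x = ∫ ω, cutCap C S ω}).Nonempty := by
    refine ⟨∫ ω, cutCap C (univ.erase t₀) ω, t₀, ht₀, univ.erase t₀, ?_, ?_, rfl⟩
    · exact Finset.mem_erase.2 ⟨hst₀, Finset.mem_univ s⟩
    · exact Finset.notMem_erase t₀ univ
  have hmem := Set.Nonempty.csInf_mem hneS hfinS
  rw [← hcmin] at hmem
  obtain ⟨t₁, ht₁T, S₀, hsS₀, ht₁S₀, hc⟩ := hmem
  -- the family of crossing edge variables
  set X : (S₀ ×ˢ S₀ᶜ : Finset (V × V)) → Ω → ℝ :=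
    fun p => C (p : V × V).1 (p : V × V).2 with hX
  have hXmeas : ∀ p, Measurable (X p) := fun p => hmeas _ _
  have hX01 : ∀ p ω, X p ω = 0 ∨ X p ω = 1 := fun p ω => h01 _ _ ω
  have hXle : ∀ p ω, 0 ≤ X p ω ∧ X p ω ≤ 1 := by
    intro p ω; rcases hX01 p ω with h | h <;> simp [h]
  have hXint : ∀ p, Integrable (X p) (volume : Measure Ω) := by
    intro p
    refine (integrable_const (1 : ℝ)).mono' (hXmeas p).aestronglyMeasurable ?_
    filter_upwards with ω
    rw [Real.norm_eq_abs, abs_le]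
    constructor <;> [linarith [(hXle p ω).1]; exact (hXle p ω).2]
  have hXindep : iIndepFun X volume :=
    hindep t₁ ht₁T S₀ hsS₀ ht₁S₀
  -- cutCap is the sum of the family
  have hcut : ∀ ω, cutCap C S₀ ω = ∑ p, X p ω := by
    intro ω
    have e1 : ∑ p, X p ω = ∑ p ∈ S₀ ×ˢ S₀ᶜ, C p.1 p.2 ω :=
      Finset.sum_coe_sort (S₀ ×ˢ S₀ᶜ) (fun p => C p.1 p.2 ω)
    have e2 : ∑ p ∈ S₀ ×ˢ S₀ᶜ, C p.1 p.2 ω = ∑ a ∈ S₀, ∑ b ∈ S₀ᶜ, C a b ω :=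
      Finset.sum_product _ _ _
    rw [cutCap, e1, e2]
  -- the cardinality
  set m : ℕ := S₀.card * S₀ᶜ.card with hm
  have hcard : Fintype.card (S₀ ×ˢ S₀ᶜ : Finset (V × V)) = m := by
    rw [Fintype.card_coe, Finset.card_product]
  have hS₀1 : 1 ≤ S₀.card := Finset.card_pos.2 ⟨s, hsS₀⟩
  have hS₀c1 : 1 ≤ S₀ᶜ.card := Finset.card_pos.2 ⟨t₁, Finset.mem_compl.2 ht₁S₀⟩
  have hsum_card : S₀.card + S₀ᶜ.card = n := by rw [Finset.card_add_card_compl, hn]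
  have hmge : (n : ℝ) - 2 ≤ (m : ℝ) := by
    have h1 : (1 : ℝ) ≤ (S₀.card : ℝ) := by exact_mod_cast hS₀1
    have h2 : (1 : ℝ) ≤ (S₀ᶜ.card : ℝ) := by exact_mod_cast hS₀c1
    have h3 : (S₀.card : ℝ) + (S₀ᶜ.card : ℝ) = n := by exact_mod_cast hsum_card
    have h4 : (m : ℝ) = (S₀.card : ℝ) * (S₀ᶜ.card : ℝ) := by exact_mod_cast hm
    nlinarith
  have hm0 : 0 < m := Nat.mul_pos hS₀1 hS₀c1
  have hm0' : (0 : ℝ) < m := by exact_mod_cast hm0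
  -- lower bound on each mean
  have hmean : ∀ p : (S₀ ×ˢ S₀ᶜ : Finset (V × V)), lam ≤ ∫ ω, X p ω := by
    intro p
    have hpmem := p.2
    rw [Finset.mem_product] at hpmem
    have hne : (p : V × V).1 ≠ (p : V × V).2 := by
      intro h
      exact (Finset.mem_compl.1 hpmem.2) (h ▸ hpmem.1)
    have hms : MeasurableSet {ω | C (p : V × V).1 (p : V × V).2 ω = 1} :=
      hmeas _ _ (measurableSet_singleton 1)
    have hindicator : ∀ ω, X p ω =
        Set.indicator {ω | C (p : V × V).1 (p : V × V).2 ω = 1} (fun _ => (1 : ℝ)) ω := by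
      intro ω
      rcases hX01 p ω with h | h
      · rw [h, eq_comm, Set.indicator_apply_eq_zero]
        intro hmem'
        simp only [Set.mem_setOf_eq] at hmem'
        rw [hX] at h
        simp only at h
        rw [hmem'] at h
        norm_num at h
      · rw [h, eq_comm]
        exact Set.indicator_of_mem (Set.mem_setOf.2 h) (fun _ => (1 : ℝ))
    have hint_eq : ∫ ω, X p ω =
        (volume {ω | C (p : V × V).1 (p : V × V).2 ω = 1}).toReal := by
      rw [show (fun ω => X p ω) = Set.indicator
        {ω | C (p : V × V).1 (p : V × V).2 ω = 1} (fun _ => (1 : ℝ)) from funext hindicator]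
      rw [integral_indicator_const (1 : ℝ) hms]
      simp [measureReal_def]
    rw [hint_eq]
    calc lam = (ENNReal.ofReal lam).toReal := (ENNReal.toReal_ofReal hlam0.le).symm
      _ ≤ _ := ENNReal.toReal_mono (measure_ne_top _ _) (hlow _ _ hne)
  -- the mean of the cut capacity
  have hmu : cmin = ∑ p, ∫ ω, X p ω := by
    rw [hc]
    rw [show (fun ω => cutCap C S₀ ω) = fun ω => ∑ p, X p ω from funext hcut]
    exact integral_finset_sum univ (fun p _ => hXint p)
  have hmu_ge : lam * m ≤ cmin := by
    rw [hmu]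
    calc lam * m = (Fintype.card (S₀ ×ˢ S₀ᶜ : Finset (V × V))) • lam := by
          rw [hcard, nsmul_eq_mul, mul_comm]
      _ ≤ ∑ p, ∫ ω, X p ω := by
          rw [← Finset.card_univ]
          exact Finset.card_nsmul_le_sum univ _ lam (fun p _ => hmean p)
  have hcmin_pos : 0 < cmin := lt_of_lt_of_le (by nlinarith) hmu_ge
  set σ : ℝ := ε * cmin with hσ
  have hσpos : 0 < σ := mul_pos hεpos hcmin_pos
  -- event inclusion
  have hsub : {ω | (1 + ε) * cmin ≤ sInf {x : ℝ | ∃ t ∈ T, ∃ S : Finset V, s ∈ S ∧ t ∉ S ∧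
        x = cutCap C S ω}} ⊆ {ω | (∑ p, ∫ ω', X p ω') + σ ≤ ∑ p, X p ω} := by
    intro ω hω
    simp only [Set.mem_setOf_eq] at hω ⊢
    have hmemω : cutCap C S₀ ω ∈ {x : ℝ | ∃ t ∈ T, ∃ S : Finset V, s ∈ S ∧ t ∉ S ∧
        x = cutCap C S ω} := ⟨t₁, ht₁T, S₀, hsS₀, ht₁S₀, rfl⟩
    have hfinω : ({x : ℝ | ∃ t ∈ T, ∃ S : Finset V, s ∈ S ∧ t ∉ S ∧
        x = cutCap C S ω}).Finite := by
      apply Set.Finite.subset (Set.finite_range (fun S : Finset V => cutCap C S ω))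
      rintro x ⟨t, _, S, _, _, rfl⟩
      exact ⟨S, rfl⟩
    have hle : sInf {x : ℝ | ∃ t ∈ T, ∃ S : Finset V, s ∈ S ∧ t ∉ S ∧
        x = cutCap C S ω} ≤ cutCap C S₀ ω := csInf_le hfinω.bddBelow hmemω
    have hfinal : (1 + ε) * cmin ≤ cutCap C S₀ ω := le_trans hω hle
    rw [hcut ω] at hfinal
    rw [← hmu]
    nlinarith [hfinal]
  calc volume {ω | (1 + ε) * cmin ≤ sInf {x : ℝ | ∃ t ∈ T, ∃ S : Finset V, s ∈ S ∧ t ∉ S ∧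
        x = cutCap C S ω}}
      ≤ volume {ω | (∑ p, ∫ ω', X p ω') + σ ≤ ∑ p, X p ω} := measure_mono hsub
    _ ≤ ENNReal.ofReal (Real.exp (-(2 * σ ^ 2 / m))) :=
        hoeffding_aux X hXmeas hX01 hXindep m hcard hm0 σ hσpos
    _ ≤ ENNReal.ofReal (((n : ℝ) - 2) ^ (-(2 * d))) := by
        apply ENNReal.ofReal_le_ofReal
        rw [Real.rpow_def_of_pos (by linarith : (0 : ℝ) < (n : ℝ) - 2)]
        rw [Real.exp_le_exp]
        have key : d * Real.log ((n : ℝ) - 2) * m ≤ σ ^ 2 := by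
          have h3 : ε * (lam * m) ≤ ε * cmin :=
            mul_le_mul_of_nonneg_left hmu_ge hεpos.le
          have h4 : (ε * (lam * m)) ^ 2 ≤ (ε * cmin) ^ 2 :=
            pow_le_pow_left₀ (by positivity) h3 2
          have h5 : d * Real.log ((n : ℝ) - 2) * m ≤ (ε * (lam * m)) ^ 2 := by
            have e1 : d * Real.log ((n : ℝ) - 2) * m
                = (ε ^ 2 * lam ^ 2) * (((n : ℝ) - 2) * m) := by
              rw [← hε2]; ring
            have e2 : (ε * (lam * m)) ^ 2 = (ε ^ 2 * lam ^ 2) * ((m : ℝ) * m) := by ring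
            rw [e1, e2]
            exact mul_le_mul_of_nonneg_left
              (mul_le_mul_of_nonneg_right hmge hm0'.le) (by positivity)
          calc d * Real.log ((n : ℝ) - 2) * m ≤ (ε * (lam * m)) ^ 2 := h5
            _ ≤ (ε * cmin) ^ 2 := h4
            _ = σ ^ 2 := by rw [hσ]
        have hfin : 2 * d * Real.log ((n : ℝ) - 2) ≤ 2 * σ ^ 2 / m := by
          rw [le_div_iff₀ hm0']
          linarith [key]
        linarith [hfin]
end

section
/- Let n ≥ 5 be an integer, let k be an even integer with 2 ≤ k ≤ n−3, and let w₁, w₂ ≥ 0 be reals. On the vertex set {0,1,…,n−1} assign to each unordered pair {i,j} of distinct vertices the weight w(i,j) = w₁ if the ring distance satisfies d(i,j) ≤ k/2, and w(i,j) = w₂ if d(i,j) > k/2. Then the minimum, over all subsets S of the vertex set with S ≠ ∅ and S ≠ {0,…,n−1}, of the cut weight Σ_{i ∈ S, j ∉ S} w(i,j), equals k·w₁ + (n−1−k)·w₂; in particular this minimum is attained by every singleton S. -/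
open Finset

/-- The ring distance on vertices `{0, …, n-1}` arranged on a cycle:
`d(i,j) = min(|i-j|, n - |i-j|)`. -/
def ringDist (n : ℕ) (i j : Fin n) : ℕ :=
  min (Nat.dist i.val j.val) (n - Nat.dist i.val j.val)

/-- Weight assignment of the paper's Lemma 6: lattice pairs (ring distance at most `k/2`)
get weight `w₁` and all other pairs get weight `w₂`. -/
noncomputable def latticeWeight (n k : ℕ) (w₁ w₂ : ℝ) (i j : Fin n) : ℝ :=
  if ringDist n i j ≤ k / 2 then w₁ else w₂

set_option linter.unusedSectionVars false

open Fin.NatCast Fin.CommRing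

section aux
variable (n : ℕ) [NeZero n] (S : Finset (Fin n))

/-- number of `i ∈ S` with `i + d ∉ S`. -/
def cutF (d : Fin n) : ℕ := (S.filter (fun i => i + d ∉ S)).card

def gF (t : ℕ) : ℕ := cutF n S (t : Fin n)

variable {n S}

lemma cutF_zero : cutF n S 0 = 0 := by
  simp [cutF, Finset.filter_eq_empty_iff]

lemma cutF_eq_zero_iff {d : Fin n} : cutF n S d = 0 ↔ ∀ i ∈ S, i + d ∈ S := by
  simp [cutF, Finset.card_eq_zero, Finset.filter_eq_empty_iff]

lemma cutF_neg (d : Fin n) : cutF n S (-d) = cutF n S d := by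
  classical
  have h1 : ∀ e : Fin n, cutF n S e = S.card - (S.filter (fun i => i + e ∈ S)).card := by
    intro e
    have := Finset.card_filter_add_card_filter_not (s := S)
      (p := fun i => i + e ∈ S)
    unfold cutF
    omega
  rw [h1, h1]
  congr 1
  apply Finset.card_bij (fun i _ => i + -d)
  · intro a ha
    simp only [Finset.mem_filter] at ha ⊢
    refine ⟨ha.2, ?_⟩
    have := ha.1
    simpa using this
  · intro a ha b hb hab
    exact add_right_cancel hab
  · intro b hb
    simp only [Finset.mem_filter] at hb
    exact ⟨b + d, by simp [hb.1, hb.2], by simp⟩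

lemma cutF_add_le (a b : Fin n) : cutF n S (a + b) ≤ cutF n S a + cutF n S b := by
  classical
  have hsub : S.filter (fun i => i + (a + b) ∉ S) ⊆
      S.filter (fun i => i + a ∉ S) ∪ (S.filter (fun j => j + b ∉ S)).image (fun j => j - a) := by
    intro i hi
    simp only [Finset.mem_filter, Finset.mem_union, Finset.mem_image] at hi ⊢
    obtain ⟨hi1, hi2⟩ := hi
    rw [← add_assoc] at hi2
    by_cases h : i + a ∈ S
    · exact Or.inr ⟨i + a, ⟨h, hi2⟩, by simp⟩
    · exact Or.inl ⟨hi1, h⟩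
  calc (S.filter (fun i => i + (a + b) ∉ S)).card
      ≤ _ := Finset.card_le_card hsub
    _ ≤ (S.filter (fun i => i + a ∉ S)).card +
        ((S.filter (fun j => j + b ∉ S)).image (fun j => j - a)).card := Finset.card_union_le _ _
    _ ≤ _ := by exact Nat.add_le_add_left (Finset.card_image_le) _

lemma gF_add_le (a b : ℕ) : gF n S (a + b) ≤ gF n S a + gF n S b := by
  unfold gF; rw [Nat.cast_add]; exact cutF_add_le _ _

lemma gF_zero : gF n S 0 = 0 := by simp [gF, cutF_zero]

lemma gF_n : gF n S n = 0 := by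
  unfold gF
  rw [show ((n : ℕ) : Fin n) = 0 by simp]
  exact cutF_zero

lemma gF_symm {t : ℕ} (ht : t ≤ n) : gF n S (n - t) = gF n S t := by
  unfold gF
  have : ((n - t : ℕ) : Fin n) = -(t : Fin n) := by
    have h : ((n - t : ℕ) : Fin n) + (t : Fin n) = 0 := by
      rw [← Nat.cast_add, Nat.sub_add_cancel ht]
      simp
    linear_combination (norm := module) h
  rw [this, cutF_neg]

lemma gF_add_n (t : ℕ) : gF n S (t + n) = gF n S t := by
  unfold gF
  congr 1
  push_cast
  simp

lemma ringDist_shift (i d : Fin n) :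
    ringDist n i (i + d) = min d.val (n - d.val) := by
  unfold ringDist
  have hadd : (i + d).val = (i.val + d.val) % n := by rw [Fin.add_def]
  have hi := i.isLt
  have hd := d.isLt
  rcases lt_or_ge (i.val + d.val) n with h | h
  · rw [hadd, Nat.mod_eq_of_lt h]
    rw [Nat.dist_eq_sub_of_le (Nat.le_add_right _ _)]
    congr 1 <;> omega
  · have hmod : (i.val + d.val) % n = i.val + d.val - n := by
      rw [Nat.mod_eq_sub_mod h, Nat.mod_eq_of_lt (by omega)]
    rw [hadd, hmod, Nat.dist_eq_sub_of_le_right (by omega)]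
    have h1 : i.val - (i.val + d.val - n) = n - d.val := by omega
    rw [h1]
    have h2 : n - (n - d.val) = d.val := by omega
    rw [h2, Nat.min_comm]

lemma cut_formula (k : ℕ) (w₁ w₂ : ℝ) :
    ∑ i ∈ S, ∑ j ∈ Sᶜ, latticeWeight n k w₁ w₂ i j
      = ∑ t ∈ range n, (if min t (n - t) ≤ k / 2 then w₁ else w₂) * (gF n S t : ℝ) := by
  classical
  have lw_eq : ∀ i d : Fin n, latticeWeight n k w₁ w₂ i (i + d)
      = if min d.val (n - d.val) ≤ k / 2 then w₁ else w₂ := by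
    intro i d
    unfold latticeWeight
    rw [ringDist_shift]
  have step1 : ∀ i : Fin n, ∑ j ∈ Sᶜ, latticeWeight n k w₁ w₂ i j
      = ∑ d : Fin n, if i + d ∉ S then
          (if min d.val (n - d.val) ≤ k / 2 then w₁ else w₂) else 0 := by
    intro i
    have e1 : ∑ j ∈ Sᶜ, latticeWeight n k w₁ w₂ i j
        = ∑ j : Fin n, if j ∈ Sᶜ then latticeWeight n k w₁ w₂ i j else 0 := by
      rw [Finset.sum_ite_mem, Finset.univ_inter]
    rw [e1]
    rw [← Equiv.sum_comp (Equiv.addLeft i)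
      (fun j => if j ∈ Sᶜ then latticeWeight n k w₁ w₂ i j else 0)]
    apply Finset.sum_congr rfl
    intro d _
    simp only [Equiv.coe_addLeft, Finset.mem_compl]
    rw [lw_eq]
  calc ∑ i ∈ S, ∑ j ∈ Sᶜ, latticeWeight n k w₁ w₂ i j
      = ∑ i ∈ S, ∑ d : Fin n, (if i + d ∉ S then
          (if min d.val (n - d.val) ≤ k / 2 then w₁ else w₂) else 0) :=
        Finset.sum_congr rfl (fun i _ => step1 i)
    _ = ∑ d : Fin n, ∑ i ∈ S, (if i + d ∉ S then
          (if min d.val (n - d.val) ≤ k / 2 then w₁ else w₂) else 0) := Finset.sum_comm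
    _ = ∑ d : Fin n, (if min d.val (n - d.val) ≤ k / 2 then w₁ else w₂) * (cutF n S d : ℝ) := by
        apply Finset.sum_congr rfl
        intro d _
        rw [← Finset.sum_filter, Finset.sum_const, nsmul_eq_mul, mul_comm]
        rfl
    _ = ∑ d : Fin n, (fun t : ℕ => (if min t (n - t) ≤ k / 2 then w₁ else w₂) * (gF n S t : ℝ)) d.val := by
        apply Finset.sum_congr rfl
        intro d _
        simp only [gF, Fin.cast_val_eq_self]
    _ = ∑ t ∈ range n, (if min t (n - t) ≤ k / 2 then w₁ else w₂) * (gF n S t : ℝ) :=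
        Fin.sum_univ_eq_sum_range (fun t : ℕ => (if min t (n - t) ≤ k / 2 then w₁ else w₂) * (gF n S t : ℝ)) n

/-- The central combinatorial bounds: near-sum is at least `2m`, far-sum at least `n-1-2m`. -/
lemma main_bounds {m : ℕ} (hm : 1 ≤ m) (hnm : 2*m + 3 ≤ n)
    (hS : S.Nonempty) (hSu : S ≠ Finset.univ) :
    2*m ≤ (∑ t ∈ Icc 1 m, gF n S t) + (∑ t ∈ Icc (n-m) (n-1), gF n S t) ∧
    n - 1 - 2*m ≤ ∑ t ∈ Icc (m+1) (n-m-1), gF n S t := by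
  classical
  have hn0 : 0 < n := Nat.pos_of_ne_zero (NeZero.ne n)
  -- a nonzero value of gF somewhere
  obtain ⟨t₀, ht₀⟩ : ∃ t₀, 1 ≤ t₀ ∧ t₀ ≤ n - 1 ∧ 1 ≤ gF n S t₀ := by
    obtain ⟨i, hi⟩ := hS
    obtain ⟨j, hj⟩ : ∃ j, j ∉ S := by
      by_contra h
      push_neg at h
      exact hSu (Finset.eq_univ_iff_forall.2 h)
    refine ⟨(j - i).val, ?_, ?_, ?_⟩
    · rcases Nat.eq_zero_or_pos (j - i).val with h | h
      · exfalso
        have : j - i = 0 := Fin.ext h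
        have : j = i := by
          have := sub_eq_zero.mp this
          exact this
        exact hj (this ▸ hi)
      · exact h
    · have := (j - i).isLt; omega
    · have : i ∈ S.filter (fun x => x + ((j - i).val : Fin n) ∉ S) := by
        rw [Finset.mem_filter, Fin.cast_val_eq_self]
        refine ⟨hi, ?_⟩
        simpa using hj
      have := Finset.card_pos.2 ⟨i, this⟩
      unfold gF cutF
      omega
  -- gF 1 is positive
  have g1 : gF n S 1 ≠ 0 := by
    intro h0
    have hall : ∀ t, gF n S t = 0 := by
      intro t
      induction t with
      | zero => exact gF_zero
      | succ t ih =>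
        have := gF_add_le (n := n) (S := S) t 1
        omega
    have := hall t₀
    omega
  -- the minimal period H
  have hex : ∃ h, 0 < h ∧ gF n S h = 0 := ⟨n, hn0, gF_n⟩
  set H := Nat.find hex with hHdef
  obtain ⟨hHpos, hHzero⟩ := Nat.find_spec hex
  rw [← hHdef] at hHpos hHzero
  have hHn : H ≤ n := Nat.find_le ⟨hn0, gF_n⟩
  have hmin : ∀ r, 0 < r → r < H → gF n S r ≠ 0 := by
    intro r h1 h2 h3
    exact Nat.find_min hex h2 ⟨h1, h3⟩
  have hH2 : 2 ≤ H := by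
    by_contra hc
    push_neg at hc
    have h1 : H = 1 := by omega
    rw [h1] at hHzero
    exact g1 hHzero
  have gmul : ∀ j, gF n S (j*H) = 0 := by
    intro j
    induction j with
    | zero => simpa using gF_zero
    | succ j ih =>
      have h1 := gF_add_le (n := n) (S := S) (j*H) H
      have h2 : (j+1)*H = j*H + H := by ring
      rw [h2]
      omega
  have hdvdn : H ∣ n := by
    have h1 : gF n S (n % H) = 0 := by
      have e : n % H = n - H*(n/H) := by
        have := Nat.div_add_mod n H
        omega
      have hle : H*(n/H) ≤ n := by
        have := Nat.div_add_mod n H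
        omega
      rw [e, gF_symm hle]
      have : H*(n/H) = (n/H)*H := by ring
      rw [this]
      exact gmul _
    rcases Nat.eq_zero_or_pos (n % H) with h | h
    · exact Nat.dvd_of_mod_eq_zero h
    · exact absurd h1 (hmin _ h (Nat.mod_lt _ hHpos))
  have hdvd_of_zero : ∀ t, t ≤ n → gF n S t = 0 → H ∣ t := by
    intro t htn h0
    have hr0 : gF n S (t % H) = 0 := by
      have h2 : gF n S (n - H*(t/H)) = 0 := by
        have hd : H ∣ (n - H*(t/H)) := Nat.dvd_sub hdvdn ⟨t/H, rfl⟩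
        obtain ⟨c, hc⟩ := hd
        rw [hc, mul_comm]
        exact gmul c
      have hle : H*(t/H) ≤ t := by
        have := Nat.div_add_mod t H
        omega
      have key : t % H + n = t + (n - H*(t/H)) := by
        have h4 := Nat.div_add_mod t H
        omega
      have h3 : gF n S (t % H + n) ≤ gF n S t + gF n S (n - H*(t/H)) := by
        rw [key]; exact gF_add_le _ _
      rw [gF_add_n] at h3
      omega
    rcases Nat.eq_zero_or_pos (t % H) with h | h
    · exact Nat.dvd_of_mod_eq_zero h
    · exact absurd hr0 (hmin _ h (Nat.mod_lt _ hHpos))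
  set q := n / H with hqdef
  have hq : H * q = n := Nat.mul_div_cancel' hdvdn
  have hq1 : 1 ≤ q := by
    rcases Nat.eq_zero_or_pos q with h | h
    · rw [h, mul_zero] at hq; omega
    · exact h
  -- lower bound q for nonzero values
  have glower : ∀ t, gF n S t ≠ 0 → q ≤ gF n S t := by
    intro t ht
    have hcard : gF n S t = (S.filter (fun i => i + (t : Fin n) ∉ S)).card := rfl
    have hne : (S.filter (fun i => i + (t : Fin n) ∉ S)).Nonempty := by
      rw [← Finset.card_pos, ← hcard]
      omega
    obtain ⟨i₀, hi₀⟩ := hne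
    rw [Finset.mem_filter] at hi₀
    obtain ⟨hi₀S, hi₀t⟩ := hi₀
    have key : ∀ j : ℕ, j < q → i₀ + ((j*H : ℕ) : Fin n) ∈ S.filter (fun i => i + (t : Fin n) ∉ S) := by
      intro j hj
      rw [Finset.mem_filter]
      constructor
      · exact (cutF_eq_zero_iff.mp (gmul j)) i₀ hi₀S
      · intro hmem
        apply hi₀t
        have h2 : gF n S ((q - j)*H) = 0 := gmul _
        have h3 := (cutF_eq_zero_iff.mp h2) _ hmem
        have e : (i₀ + ((j*H : ℕ) : Fin n) + (t : Fin n)) + (((q-j)*H : ℕ) : Fin n)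
            = i₀ + (t : Fin n) := by
          have : ((j*H : ℕ) : Fin n) + (((q-j)*H : ℕ) : Fin n) = 0 := by
            rw [← Nat.cast_add]
            have : j*H + (q-j)*H = n := by
              have : j*H + (q-j)*H = q*H := by
                have : j ≤ q := le_of_lt hj
                nlinarith [Nat.sub_add_cancel this]
              rw [this, mul_comm]; exact hq
            rw [this]
            simp
          calc i₀ + ((j*H : ℕ) : Fin n) + (t : Fin n) + (((q-j)*H : ℕ) : Fin n)
              = i₀ + (t : Fin n) + (((j*H : ℕ) : Fin n) + (((q-j)*H : ℕ) : Fin n)) := by ring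
            _ = i₀ + (t : Fin n) := by rw [this, add_zero]
        rw [e] at h3
        exact h3
    have hinj : ∀ j₁ ∈ Finset.range q, ∀ j₂ ∈ Finset.range q,
        i₀ + ((j₁*H : ℕ) : Fin n) = i₀ + ((j₂*H : ℕ) : Fin n) → j₁ = j₂ := by
      intro j₁ hj₁ j₂ hj₂ h
      rw [Finset.mem_range] at hj₁ hj₂
      have h2 : ((j₁*H : ℕ) : Fin n) = ((j₂*H : ℕ) : Fin n) := add_left_cancel h
      have hv : (j₁*H) % n = (j₂*H) % n := by
        have h3 := congrArg Fin.val h2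
        rw [Fin.val_natCast, Fin.val_natCast] at h3
        exact h3
      have hb : ∀ j, j < q → j*H < n := by
        intro j hj
        calc j*H < q*H := by
              exact (Nat.mul_lt_mul_right hHpos).2 hj
          _ = n := by rw [mul_comm]; exact hq
      rw [Nat.mod_eq_of_lt (hb _ hj₁), Nat.mod_eq_of_lt (hb _ hj₂)] at hv
      exact Nat.eq_of_mul_eq_mul_right hHpos hv
    have := Finset.card_le_card_of_injOn (fun j => i₀ + ((j*H : ℕ) : Fin n))
      (fun j hj => key j (Finset.mem_range.mp hj))
      (fun j₁ hj₁ j₂ hj₂ h => hinj j₁ hj₁ j₂ hj₂ h)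
    rw [Finset.card_range] at this
    rw [hcard]
    exact this
  -- generic sum lower bound
  have sum_ge : ∀ R : Finset ℕ, (∀ t ∈ R, t ≤ n) →
      q * (R.filter (fun t => ¬ H ∣ t)).card ≤ ∑ t ∈ R, gF n S t := by
    intro R hR
    have h1 : ∀ t ∈ R.filter (fun t => ¬ H ∣ t), q ≤ gF n S t := by
      intro t ht
      rw [Finset.mem_filter] at ht
      apply glower
      intro h0
      exact ht.2 (hdvd_of_zero t (hR t ht.1) h0)
    calc q * (R.filter (fun t => ¬ H ∣ t)).card
        = ∑ _t ∈ R.filter (fun t => ¬ H ∣ t), q := by rw [Finset.sum_const, smul_eq_mul, mul_comm]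
      _ ≤ ∑ t ∈ R.filter (fun t => ¬ H ∣ t), gF n S t := Finset.sum_le_sum h1
      _ ≤ ∑ t ∈ R, gF n S t := Finset.sum_le_sum_of_subset (Finset.filter_subset _ _)
  constructor
  · -- near bound
    have hsymm : ∑ t ∈ Icc (n-m) (n-1), gF n S t = ∑ t ∈ Icc 1 m, gF n S t := by
      apply Finset.sum_nbij' (fun t => n - t) (fun t => n - t)
      · intro a ha
        rw [Finset.mem_Icc] at ha ⊢
        omega
      · intro a ha
        rw [Finset.mem_Icc] at ha ⊢
        omega
      · intro a ha
        rw [Finset.mem_Icc] at ha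
        omega
      · intro a ha
        rw [Finset.mem_Icc] at ha
        omega
      · intro a ha
        rw [Finset.mem_Icc] at ha
        rw [gF_symm (by omega)]
    rw [hsymm]
    have hcount : ((Icc 1 m).filter (fun t => ¬ H ∣ t)).card = m - m / H := by
      have h1 : ((Icc 1 m).filter (fun t => H ∣ t)).card = m / H := by
        rw [show Icc 1 m = Ioc 0 m from (Finset.Icc_add_one_left_eq_Ioc 0 m)]
        exact Nat.Ioc_filter_dvd_card_eq_div m H
      have h2 := Finset.card_filter_add_card_filter_not (s := Icc 1 m)
        (p := fun t => H ∣ t)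
      rw [Nat.card_Icc] at h2
      omega
    have hnt1 : m ≤ q * (m - m / H) := by
      rcases Nat.eq_zero_or_pos (m / H) with h | h
      · rw [h, Nat.sub_zero]
        calc m = 1 * m := (one_mul m).symm
          _ ≤ q * m := Nat.mul_le_mul_right m hq1
      · have hHm : H ≤ m := by
          by_contra hc
          push_neg at hc
          rw [Nat.div_eq_of_lt hc] at h
          omega
        have h2a : 2 * (m / H) ≤ m := by
          calc 2 * (m / H) ≤ H * (m / H) := Nat.mul_le_mul_right _ hH2
            _ ≤ m := by
                have := Nat.div_add_mod m H
                omega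
        have hq2 : 2 ≤ q := by
          by_contra hc
          push_neg at hc
          have hq1' : q = 1 := by omega
          rw [hq1', mul_one] at hq
          omega
        calc m ≤ 2 * (m - m / H) := by omega
          _ ≤ q * (m - m / H) := Nat.mul_le_mul_right _ hq2
    have hsge := sum_ge (Icc 1 m) (by intro t ht; rw [Finset.mem_Icc] at ht; omega)
    rw [hcount] at hsge
    have hms : m ≤ ∑ t ∈ Icc 1 m, gF n S t := le_trans hnt1 hsge
    omega
  · -- far bound
    set R := Icc (m+1) (n-m-1) with hR
    set μ := (R.filter (fun t => H ∣ t)).card with hμ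
    have hcardR : R.card = n - 2*m - 1 := by
      rw [hR, Nat.card_Icc]; omega
    have hsplit := Finset.card_filter_add_card_filter_not (s := R) (p := fun t => H ∣ t)
    rw [← hμ] at hsplit
    -- μ ≤ q - 1
    have hμq : μ ≤ q - 1 := by
      have : μ ≤ (Icc 1 (q-1)).card := by
        apply Finset.card_le_card_of_injOn (fun t => t / H)
        · intro t ht
          rw [Finset.mem_coe, Finset.mem_filter, hR, Finset.mem_Icc] at ht
          obtain ⟨⟨ht1, ht2⟩, htd⟩ := ht
          obtain ⟨c, hc⟩ := htd
          simp only [Finset.mem_coe, Finset.mem_Icc]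
          subst hc
          rw [Nat.mul_div_cancel_left c hHpos]
          constructor
          · rcases Nat.eq_zero_or_pos c with h | h
            · exfalso
              rw [h, Nat.mul_zero] at ht1
              omega
            · exact h
          · have h5 : H * c < H * q := by
              calc H * c ≤ n - m - 1 := ht2
                _ < n := by omega
                _ = H * q := hq.symm
            have h6 := Nat.lt_of_mul_lt_mul_left h5
            omega
        · intro t₁ ht₁ t₂ ht₂ h
          have h' : t₁ / H = t₂ / H := h
          rw [Finset.coe_filter] at ht₁ ht₂
          simp only [Set.mem_setOf_eq] at ht₁ ht₂
          rw [← Nat.mul_div_cancel' ht₁.2, ← Nat.mul_div_cancel' ht₂.2, h']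
      rw [Nat.card_Icc] at this
      omega
    -- H * μ ≤ (n - 2*m - 2) + H
    have hμH : H * μ ≤ (n - 2*m - 2) + H := by
      set a := (m + H) / H with hadef
      set b := (n - m - 1) / H with hbdef
      have hμab : μ ≤ b + 1 - a := by
        have : μ ≤ (Icc a b).card := by
          apply Finset.card_le_card_of_injOn (fun t => t / H)
          · intro t ht
            rw [Finset.mem_coe, Finset.mem_filter, hR, Finset.mem_Icc] at ht
            obtain ⟨⟨ht1, ht2⟩, htd⟩ := ht
            simp only [Finset.mem_coe, Finset.mem_Icc]
            constructor
            · -- a ≤ t / H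
              obtain ⟨c, hc⟩ := htd
              have hac : a < c + 1 := by
                rw [hadef, Nat.div_lt_iff_lt_mul hHpos]
                calc m + H < H * c + H := by omega
                  _ = (c + 1) * H := by ring
              rw [hc, Nat.mul_div_cancel_left c hHpos]
              omega
            · exact Nat.div_le_div_right ht2
          · intro t₁ ht₁ t₂ ht₂ h
            have h' : t₁ / H = t₂ / H := h
            rw [Finset.coe_filter] at ht₁ ht₂
            simp only [Set.mem_setOf_eq] at ht₁ ht₂
            rw [← Nat.mul_div_cancel' ht₁.2, ← Nat.mul_div_cancel' ht₂.2, h']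
        rw [Nat.card_Icc] at this
        exact this
      have hHa : m + 1 ≤ H * a := by
        rw [hadef]
        have h1 := Nat.div_add_mod (m + H) H
        have h2 : (m + H) % H < H := Nat.mod_lt _ hHpos
        omega
      have hHb : H * b ≤ n - m - 1 := by
        rw [hbdef]
        have := Nat.div_add_mod (n - m - 1) H
        omega
      calc H * μ ≤ H * (b + 1 - a) := Nat.mul_le_mul_left _ hμab
        _ = H * (b + 1) - H * a := Nat.mul_sub ..
        _ ≤ (n - 2*m - 2) + H := by
            have e2 : H * (b + 1) = H * b + H := by ring
            omega
    -- now the arithmetic conclusion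
    have hfar := sum_ge R (by intro t ht; rw [hR, Finset.mem_Icc] at ht; omega)
    set N := n - 1 - 2*m with hNdef
    have hcf : (R.filter (fun t => ¬ H ∣ t)).card = N - μ := by omega
    rw [hcf] at hfar
    have hN2 : 2 ≤ N := by omega
    have hnt2 : N ≤ q * (N - μ) := by
      rcases Nat.lt_or_ge q 3 with hq3 | hq3
      · interval_cases q
        · -- q = 1 : μ = 0
          have : μ = 0 := by omega
          omega
        · -- q = 2 : μ ≤ 1
          have : μ ≤ 1 := by omega
          omega
      · -- q ≥ 3
        rcases Nat.lt_or_ge μ 2 with hμ2 | hμ2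
        · -- μ ≤ 1
          have h1 : N ≤ 3 * (N - μ) := by omega
          calc N ≤ 3 * (N - μ) := h1
            _ ≤ q * (N - μ) := Nat.mul_le_mul_right _ hq3
        · -- μ ≥ 2
          have h1 : H * (μ - 1) ≤ N - 1 := by
            have e : H * (μ - 1) = H * μ - H := by
              rw [Nat.mul_sub, mul_one]
            omega
          have h2 : 2 * (μ - 1) ≤ H * (μ - 1) := Nat.mul_le_mul_right _ hH2
          have h3 : 2 * μ ≤ N + 1 := by omega
          have h4 : 3 ≤ N := by omega
          have h5 : N ≤ 3 * (N - μ) := by omega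
          calc N ≤ 3 * (N - μ) := h5
            _ ≤ q * (N - μ) := Nat.mul_le_mul_right _ hq3
    omega

/-- value of `gF` for a singleton. -/
lemma gF_singleton (v : Fin n) {t : ℕ} (h1 : 1 ≤ t) (h2 : t ≤ n - 1) :
    gF n ({v} : Finset (Fin n)) t = 1 := by
  have hne : v + (t : Fin n) ≠ v := by
    intro h
    have h3 : (t : Fin n) = 0 := by
      have := add_eq_left.mp (by rwa [] at h)
      exact this
    have := congrArg Fin.val h3
    rw [Fin.val_natCast] at this
    have hn0 : 0 < n := Nat.pos_of_ne_zero (NeZero.ne n)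
    rw [Nat.mod_eq_of_lt (by omega)] at this
    simp at this
    omega
  unfold gF cutF
  rw [Finset.filter_singleton]
  simp [hne]

end aux

/-- paper's Lemma 6. In the complete weighted graph on `n` ring vertices
where lattice pairs weigh `w₁ ≥ 0` and other pairs weigh `w₂ ≥ 0`, the global minimum cut
value equals `k w₁ + (n-1-k) w₂`, attained by every singleton. -/
theorem stmt_6 (n k : ℕ) (hn : 5 ≤ n) (hk2 : 2 ≤ k) (hk : k ≤ n - 3) (hke : Even k)
    (w₁ w₂ : ℝ) (hw₁ : 0 ≤ w₁) (hw₂ : 0 ≤ w₂) :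
    (∀ S : Finset (Fin n), S.Nonempty → S ≠ Finset.univ →
        (k : ℝ) * w₁ + ((n : ℝ) - 1 - (k : ℝ)) * w₂ ≤
          ∑ i ∈ S, ∑ j ∈ Sᶜ, latticeWeight n k w₁ w₂ i j) ∧
    (∀ v : Fin n,
        ∑ i ∈ ({v} : Finset (Fin n)), ∑ j ∈ ({v} : Finset (Fin n))ᶜ,
            latticeWeight n k w₁ w₂ i j =
          (k : ℝ) * w₁ + ((n : ℝ) - 1 - (k : ℝ)) * w₂) := by
  haveI : NeZero n := ⟨by omega⟩
  set m := k / 2 with hmdef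
  have hkm : k = 2 * m := by
    obtain ⟨r, hr⟩ := hke
    omega
  have hm1 : 1 ≤ m := by omega
  have hnm : 2*m + 3 ≤ n := by omega
  -- split of the range-sum into three intervals
  have split : ∀ S : Finset (Fin n),
      ∑ i ∈ S, ∑ j ∈ Sᶜ, latticeWeight n k w₁ w₂ i j
        = w₁ * (∑ t ∈ Icc 1 m, (gF n S t : ℝ))
          + w₂ * (∑ t ∈ Icc (m+1) (n-m-1), (gF n S t : ℝ))
          + w₁ * (∑ t ∈ Icc (n-m) (n-1), (gF n S t : ℝ)) := by
    intro S
    rw [cut_formula]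
    have e0 : range n = Ico 0 n := by rw [Finset.range_eq_Ico]
    rw [e0]
    rw [← Finset.sum_Ico_consecutive _ (by omega : (0:ℕ) ≤ 1) (by omega : 1 ≤ n)]
    rw [← Finset.sum_Ico_consecutive _ (by omega : (1:ℕ) ≤ m+1) (by omega : m+1 ≤ n)]
    rw [← Finset.sum_Ico_consecutive _ (by omega : (m+1:ℕ) ≤ n-m) (by omega : n-m ≤ n)]
    have hz : ∑ t ∈ Ico 0 1, (if min t (n - t) ≤ k / 2 then w₁ else w₂) * (gF n S t : ℝ) = 0 := by
      rw [show Ico 0 1 = {0} from rfl]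
      rw [Finset.sum_singleton, gF_zero]
      simp
    rw [hz, zero_add]
    have e1 : Ico 1 (m+1) = Icc 1 m := Finset.Ico_add_one_right_eq_Icc 1 m
    have e2 : Ico (m+1) (n-m) = Icc (m+1) (n-m-1) := by
      rw [← Finset.Ico_add_one_right_eq_Icc]
      congr 1
      omega
    have e3 : Ico (n-m) n = Icc (n-m) (n-1) := by
      rw [← Finset.Ico_add_one_right_eq_Icc]
      congr 1
      omega
    rw [e1, e2, e3]
    have E1 : ∑ t ∈ Icc 1 m, (if min t (n - t) ≤ k / 2 then w₁ else w₂) * (gF n S t : ℝ)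
        = w₁ * (∑ t ∈ Icc 1 m, (gF n S t : ℝ)) := by
      rw [Finset.mul_sum]
      apply Finset.sum_congr rfl
      intro t ht
      rw [Finset.mem_Icc] at ht
      rw [if_pos (by rw [← hmdef]; omega)]
    have E2 : ∑ t ∈ Icc (m+1) (n-m-1), (if min t (n - t) ≤ k / 2 then w₁ else w₂) * (gF n S t : ℝ)
        = w₂ * (∑ t ∈ Icc (m+1) (n-m-1), (gF n S t : ℝ)) := by
      rw [Finset.mul_sum]
      apply Finset.sum_congr rfl
      intro t ht
      rw [Finset.mem_Icc] at ht
      rw [if_neg (by rw [← hmdef]; omega)]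
    have E3 : ∑ t ∈ Icc (n-m) (n-1), (if min t (n - t) ≤ k / 2 then w₁ else w₂) * (gF n S t : ℝ)
        = w₁ * (∑ t ∈ Icc (n-m) (n-1), (gF n S t : ℝ)) := by
      rw [Finset.mul_sum]
      apply Finset.sum_congr rfl
      intro t ht
      rw [Finset.mem_Icc] at ht
      rw [if_pos (by rw [← hmdef]; omega)]
    rw [E1, E2, E3]
    ring
  constructor
  · intro S hS hSu
    obtain ⟨hnear, hfar⟩ := main_bounds hm1 hnm hS hSu
    rw [split S]
    have hA : (2*m : ℝ) ≤ (∑ t ∈ Icc 1 m, (gF n S t : ℝ)) + (∑ t ∈ Icc (n-m) (n-1), (gF n S t : ℝ)) := by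
      push_cast [← Nat.cast_sum]
      exact_mod_cast hnear
    have hB : ((n : ℝ) - 1 - 2*m) ≤ ∑ t ∈ Icc (m+1) (n-m-1), (gF n S t : ℝ) := by
      have : ((n - 1 - 2*m : ℕ) : ℝ) ≤ ∑ t ∈ Icc (m+1) (n-m-1), (gF n S t : ℝ) := by
        exact_mod_cast hfar
      have e : ((n - 1 - 2*m : ℕ) : ℝ) = (n : ℝ) - 1 - 2*m := by
        have h1 : (2*m : ℕ) ≤ n - 1 := by omega
        rw [Nat.cast_sub h1, Nat.cast_sub (by omega : 1 ≤ n)]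
        push_cast
        ring
      rw [← e]
      exact this
    have hkr : (k : ℝ) = 2*m := by exact_mod_cast hkm
    calc (k : ℝ) * w₁ + ((n : ℝ) - 1 - (k : ℝ)) * w₂
        = w₁ * (2*m : ℝ) + w₂ * ((n:ℝ) - 1 - 2*m) := by rw [hkr]; ring
      _ ≤ w₁ * ((∑ t ∈ Icc 1 m, (gF n S t : ℝ)) + (∑ t ∈ Icc (n-m) (n-1), (gF n S t : ℝ)))
            + w₂ * (∑ t ∈ Icc (m+1) (n-m-1), (gF n S t : ℝ)) := by
          apply add_le_add
          · exact mul_le_mul_of_nonneg_left hA hw₁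
          · exact mul_le_mul_of_nonneg_left hB hw₂
      _ = w₁ * (∑ t ∈ Icc 1 m, (gF n S t : ℝ))
          + w₂ * (∑ t ∈ Icc (m+1) (n-m-1), (gF n S t : ℝ))
          + w₁ * (∑ t ∈ Icc (n-m) (n-1), (gF n S t : ℝ)) := by ring
  · intro v
    rw [split {v}]
    have hs1 : ∑ t ∈ Icc 1 m, (gF n ({v} : Finset (Fin n)) t : ℝ) = m := by
      have h : ∀ t ∈ Icc 1 m, (gF n ({v} : Finset (Fin n)) t : ℝ) = 1 := by
        intro t ht
        rw [Finset.mem_Icc] at ht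
        rw [gF_singleton v ht.1 (by omega)]
        norm_num
      rw [Finset.sum_congr rfl h, Finset.sum_const, Nat.card_Icc]
      simp
    have hs2 : ∑ t ∈ Icc (m+1) (n-m-1), (gF n ({v} : Finset (Fin n)) t : ℝ) = (n : ℝ) - 1 - 2*m := by
      have h : ∀ t ∈ Icc (m+1) (n-m-1), (gF n ({v} : Finset (Fin n)) t : ℝ) = 1 := by
        intro t ht
        rw [Finset.mem_Icc] at ht
        rw [gF_singleton v (by omega) (by omega)]
        norm_num
      rw [Finset.sum_congr rfl h, Finset.sum_const, Nat.card_Icc]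
      have e : (n - m - 1 + 1 - (m+1) : ℕ) = n - 1 - 2*m := by omega
      rw [e, nsmul_eq_mul, mul_one]
      have h1 : (2*m : ℕ) ≤ n - 1 := by omega
      rw [Nat.cast_sub h1, Nat.cast_sub (by omega : 1 ≤ n)]
      push_cast
      ring
    have hs3 : ∑ t ∈ Icc (n-m) (n-1), (gF n ({v} : Finset (Fin n)) t : ℝ) = m := by
      have h : ∀ t ∈ Icc (n-m) (n-1), (gF n ({v} : Finset (Fin n)) t : ℝ) = 1 := by
        intro t ht
        rw [Finset.mem_Icc] at ht
        rw [gF_singleton v (by omega) ht.2]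
        norm_num
      rw [Finset.sum_congr rfl h, Finset.sum_const, Nat.card_Icc]
      have e : (n - 1 + 1 - (n - m) : ℕ) = m := by omega
      rw [e]
      simp
    rw [hs1, hs2, hs3]
    have hkr : (k : ℝ) = 2*m := by exact_mod_cast hkm
    rw [hkr]
    ring
end

section
/- Let n ≥ 5 be an integer, let k be an even integer with 2 ≤ k ≤ n−3, and let p ∈ [0,1]. On the vertex set {0,1,…,n−1} assign to each unordered pair {i,j} of distinct vertices the weight w(i,j) = 1 if the ring distance satisfies d(i,j) ≤ k/2, and w(i,j) = p if d(i,j) > k/2. Then for any two distinct vertices s and t, the minimum over all subsets S with s ∈ S and t ∉ S of the cut weight Σ_{i ∈ S, j ∉ S} w(i,j) equals k + (n−1−k)·p. -/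
open Finset

/-- Expected-capacity weights of the small-world network with shortcuts:
lattice pairs (ring distance at most `k/2`) have weight `1`, other pairs weight `p`. -/
noncomputable def shortcutWeight (n k : ℕ) (p : ℝ) (i j : Fin n) : ℝ :=
  if ringDist n i j ≤ k / 2 then 1 else p

set_option linter.unusedSectionVars false

section Aux
variable {n : ℕ} [NeZero n]

variable {n : ℕ} [NeZero n]

def natFin (n : ℕ) [NeZero n] (v : ℕ) : Fin n :=
  ⟨v % n, Nat.mod_lt _ (Nat.pos_of_ne_zero (NeZero.ne n))⟩

lemma natFin_val (v : ℕ) : (natFin n v).val = v % n := rfl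

lemma natFin_add (x y : ℕ) : natFin n (x + y) = natFin n x + natFin n y := by
  apply Fin.ext
  rw [Fin.add_def, natFin_val, natFin_val, natFin_val, Nat.add_mod]

lemma natFin_val_of_lt {v : ℕ} (hv : v < n) : (natFin n v).val = v := by
  rw [natFin_val, Nat.mod_eq_of_lt hv]

lemma natFin_self_val (a : Fin n) : natFin n a.val = a :=
  Fin.ext (natFin_val_of_lt a.isLt)

/-- invariance of `S` under shift by `a` -/
def ShiftInv (S : Finset (Fin n)) (a : Fin n) : Prop := ∀ i : Fin n, i + a ∈ S ↔ i ∈ S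

lemma inv_cancel {S : Finset (Fin n)} {a b : Fin n} (hab : ShiftInv S (a + b)) (ha : ShiftInv S a) :
    ShiftInv S b := by
  intro i
  have h1 := hab i
  have h2 := ha (i + b)
  rw [add_right_comm] at h2
  rw [← add_assoc] at h1
  tauto

lemma inv_nsmul {S : Finset (Fin n)} {a : Fin n} (ha : ShiftInv S a) (q : ℕ) :
    ShiftInv S (q • a) := by
  induction q with
  | zero => intro i; simp
  | succ q ih =>
      intro i
      rw [succ_nsmul, ← add_assoc]
      exact (ha _).trans (ih i)

def B (S : Finset (Fin n)) (v : ℕ) : ℕ := (S.filter (fun i => i + natFin n v ∉ S)).card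

lemma inv_of_B_eq_zero {S : Finset (Fin n)} {v : ℕ} (h : B S v = 0) : ShiftInv S (natFin n v) := by
  have hmem : ∀ i ∈ S, i + natFin n v ∈ S := by
    intro i hi
    by_contra hc
    have : i ∈ S.filter (fun i => i + natFin n v ∉ S) := mem_filter.mpr ⟨hi, hc⟩
    rw [B, Finset.card_eq_zero] at h
    simp [h] at this
  have himg : S.image (· + natFin n v) = S := by
    apply Finset.eq_of_subset_of_card_le
    · intro x hx
      obtain ⟨i, hi, rfl⟩ := Finset.mem_image.mp hx
      exact hmem i hi
    · rw [Finset.card_image_of_injective _ (add_left_injective _)]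
  intro i
  constructor
  · intro hi
    rw [← himg] at hi
    obtain ⟨x, hx, he⟩ := Finset.mem_image.mp hi
    have : x = i := by
      have := add_right_cancel he
      exact this
    rwa [← this]
  · intro hi
    rw [← himg]
    exact Finset.mem_image.mpr ⟨i, hi, rfl⟩

lemma B_eq_zero_of_inv {S : Finset (Fin n)} {v : ℕ} (h : ShiftInv S (natFin n v)) : B S v = 0 := by
  rw [B, Finset.card_eq_zero, Finset.filter_eq_empty_iff]
  intro i hi
  simp only [not_not]
  exact (h i).mpr hi

lemma inv_natFin_mul {S : Finset (Fin n)} {d : ℕ} (h : ShiftInv S (natFin n d)) (q : ℕ) :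
    ShiftInv S (natFin n (q * d)) := by
  have : natFin n (q * d) = q • natFin n d := by
    induction q with
    | zero => simp [natFin]
    | succ q ih => rw [succ_nsmul, Nat.succ_mul, natFin_add, ih]
  rw [this]
  exact inv_nsmul h q

lemma inv_one_absurd {S : Finset (Fin n)} (h : ShiftInv S (natFin n 1)) (hS : S.Nonempty)
    (hSc : Sᶜ.Nonempty) : False := by
  obtain ⟨s, hs⟩ := hS
  obtain ⟨x, hx⟩ := hSc
  have hall : ∀ v : ℕ, ShiftInv S (natFin n v) := by
    intro v
    have := inv_natFin_mul h v
    rwa [Nat.mul_one] at this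
  have hinv := hall (x - s).val
  rw [natFin_self_val] at hinv
  have : x ∈ S := by
    have h2 := hinv s
    rw [add_comm, sub_add_cancel] at h2
    exact h2.mpr hs
  exact (Finset.mem_compl.mp hx) this


lemma key {m : ℕ} (hm : 1 ≤ m) (h2m : 2*m + 3 ≤ n) {S : Finset (Fin n)}
    (hS : S.Nonempty) (hSc : Sᶜ.Nonempty) :
    m ≤ ∑ v ∈ Icc 1 m, B S v := by
  by_cases hd : ∃ v ∈ Icc 1 m, B S v = 0
  · set T := (Icc 1 m).filter (fun v => B S v = 0) with hT
    have hTne : T.Nonempty := by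
      obtain ⟨v, hv, hv0⟩ := hd; exact ⟨v, mem_filter.mpr ⟨hv, hv0⟩⟩
    set d := T.min' hTne with hdd
    have hdT : d ∈ T := T.min'_mem hTne
    have hdmin : ∀ v ∈ T, d ≤ v := fun v hv => T.min'_le v hv
    obtain ⟨hdI, hd0⟩ := mem_filter.mp hdT
    have hd1 : 1 ≤ d := (mem_Icc.mp hdI).1
    have hdm : d ≤ m := (mem_Icc.mp hdI).2
    have hInvd : ShiftInv S (natFin n d) := inv_of_B_eq_zero hd0
    have hd2 : 2 ≤ d := by
      by_contra hc
      have h1 : d = 1 := by omega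
      rw [h1] at hInvd
      exact (inv_one_absurd hInvd hS hSc).elim
    have hgood : ∀ v ∈ Icc 1 m, ¬ d ∣ v → 2 ≤ B S v := by
      intro v hvI hvd
      have hv1 := (mem_Icc.mp hvI).1
      have hvm := (mem_Icc.mp hvI).2
      have hBne : B S v ≠ 0 := by
        intro h0
        have hInvv : ShiftInv S (natFin n v) := inv_of_B_eq_zero h0
        have hq : ShiftInv S (natFin n ((v / d) * d)) := inv_natFin_mul hInvd (v/d)
        have hsplit : natFin n v = natFin n ((v/d)*d) + natFin n (v % d) := by
          rw [← natFin_add]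
          congr 1
          rw [Nat.mul_comm]
          exact (Nat.div_add_mod v d).symm
        have hInvr : ShiftInv S (natFin n (v % d)) := by
          rw [hsplit] at hInvv
          exact inv_cancel hInvv hq
        have hr0 : v % d ≠ 0 := fun h => hvd (Nat.dvd_of_mod_eq_zero h)
        have hlt := Nat.mod_lt v (show 0 < d by omega)
        have hrT : v % d ∈ T := mem_filter.mpr ⟨mem_Icc.mpr ⟨by omega, by omega⟩,
          B_eq_zero_of_inv hInvr⟩
        have := hdmin _ hrT
        omega
      obtain ⟨i, hi⟩ := Finset.card_ne_zero.mp hBne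
      obtain ⟨hiS, hiv⟩ := mem_filter.mp hi
      have hi2S : i + natFin n d ∈ S := (hInvd i).mpr hiS
      have hi2v : ¬ ((i + natFin n d) + natFin n v ∈ S) := by
        rw [add_right_comm]
        intro hc
        exact hiv ((hInvd (i + natFin n v)).mp hc)
      have hne : i ≠ i + natFin n d := by
        intro hc
        have h0 : natFin n d = 0 := left_eq_add.mp hc
        have hval := congrArg Fin.val h0
        rw [natFin_val_of_lt (by omega)] at hval
        simp only [Fin.val_zero] at hval
        omega
      have : 1 < B S v := Finset.one_lt_card.mpr
        ⟨i, mem_filter.mpr ⟨hiS, hiv⟩, i + natFin n d, mem_filter.mpr ⟨hi2S, hi2v⟩, hne⟩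
      omega
    have hcard : ((Icc 1 m).filter (fun v => ¬ d ∣ v)).card = m - m / d := by
      have hIoc : Icc 1 m = Ioc 0 m := by
        ext x; simp [Nat.lt_iff_add_one_le]
      have h1 : ((Icc 1 m).filter (fun v => d ∣ v)).card = m / d := by
        rw [hIoc]
        exact Nat.Ioc_filter_dvd_card_eq_div m d
      have h2 := Finset.card_filter_add_card_filter_not
        (s := Icc 1 m) (p := fun v => d ∣ v)
      rw [Nat.card_Icc] at h2
      omega
    have hdiv : m / d ≤ m / 2 := Nat.div_le_div_left hd2 zero_lt_two
    calc m ≤ 2 * (m - m / d) := by omega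
      _ = ((Icc 1 m).filter (fun v => ¬ d ∣ v)).card * 2 := by rw [hcard]; ring
      _ ≤ ∑ v ∈ (Icc 1 m).filter (fun v => ¬ d ∣ v), B S v := by
            have h := Finset.card_nsmul_le_sum ((Icc 1 m).filter (fun v => ¬ d ∣ v)) (B S) 2
              (fun v hv => hgood v (mem_filter.mp hv).1 (mem_filter.mp hv).2)
            simpa using h
      _ ≤ ∑ v ∈ Icc 1 m, B S v := Finset.sum_le_sum_of_subset (filter_subset _ _)
  · push_neg at hd
    calc m = ∑ _v ∈ Icc 1 m, 1 := by
              rw [Finset.sum_const, Nat.card_Icc, smul_eq_mul, mul_one]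
              omega
      _ ≤ ∑ v ∈ Icc 1 m, B S v :=
              Finset.sum_le_sum (fun v hv => Nat.one_le_iff_ne_zero.mpr (hd v hv))


lemma sub_val' (i j : Fin n) :
    (j - i).val = if i.val ≤ j.val then j.val - i.val else n - (i.val - j.val) := by
  rw [Fin.sub_def]
  simp only
  have hi := i.isLt; have hj := j.isLt
  split
  · have h : n - i.val + j.val = n + (j.val - i.val) := by omega
    rw [h, Nat.add_mod_left, Nat.mod_eq_of_lt (by omega)]
  · have h : n - i.val + j.val = n - (i.val - j.val) := by omega
    rw [h, Nat.mod_eq_of_lt (by omega)]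

lemma sub_val_rev {i j : Fin n} (h : i ≠ j) : (i - j).val + (j - i).val = n := by
  have hv : i.val ≠ j.val := fun hc => h (Fin.ext hc)
  have hi := i.isLt; have hj := j.isLt
  rw [sub_val', sub_val']
  split <;> split <;> omega

lemma ringDist_le_iff (m : ℕ) (i j : Fin n) :
    ringDist n i j ≤ m ↔ (j - i).val ≤ m ∨ n - (j - i).val ≤ m := by
  have hi := i.isLt; have hj := j.isLt
  rw [ringDist, Nat.dist, sub_val']
  split <;> omega

lemma fiberA_card (S : Finset (Fin n)) (v : ℕ) :
    ((S ×ˢ Sᶜ).filter (fun q => q.2 = q.1 + natFin n v)).card = B S v := by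
  rw [B]
  apply Finset.card_bij (fun q _ => q.1)
  · intro q hq
    obtain ⟨hmem, he⟩ := mem_filter.mp hq
    obtain ⟨h1, h2⟩ := Finset.mem_product.mp hmem
    exact mem_filter.mpr ⟨h1, by rw [← he]; exact Finset.mem_compl.mp h2⟩
  · intro q hq q' hq' he
    obtain ⟨_, h2⟩ := mem_filter.mp hq
    obtain ⟨_, h2'⟩ := mem_filter.mp hq'
    exact Prod.ext he (by rw [h2, h2', he])
  · intro i hi
    obtain ⟨hiS, hiv⟩ := mem_filter.mp hi
    exact ⟨(i, i + natFin n v),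
      mem_filter.mpr ⟨Finset.mem_product.mpr ⟨hiS, Finset.mem_compl.mpr hiv⟩, rfl⟩, rfl⟩

lemma fiberB_card (S : Finset (Fin n)) (v : ℕ) :
    ((S ×ˢ Sᶜ).filter (fun q => q.1 = q.2 + natFin n v)).card = B Sᶜ v := by
  rw [B]
  apply Finset.card_bij (fun q _ => q.2)
  · intro q hq
    obtain ⟨hmem, he⟩ := mem_filter.mp hq
    obtain ⟨h1, h2⟩ := Finset.mem_product.mp hmem
    refine mem_filter.mpr ⟨h2, ?_⟩
    rw [← he]
    simp only [Finset.mem_compl, not_not]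
    exact h1
  · intro q hq q' hq' he
    obtain ⟨_, h2⟩ := mem_filter.mp hq
    obtain ⟨_, h2'⟩ := mem_filter.mp hq'
    exact Prod.ext (by rw [h2, h2', he]) he
  · intro j hj
    obtain ⟨hjc, hjv⟩ := mem_filter.mp hj
    refine ⟨(j + natFin n v, j), mem_filter.mpr ⟨Finset.mem_product.mpr ⟨?_, hjc⟩, rfl⟩, rfl⟩
    simp only [Finset.mem_compl, not_not] at hjv
    exact hjv

lemma natFin_ne_zero {v : ℕ} (h1 : 1 ≤ v) (h2 : v < n) : natFin n v ≠ 0 := by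
  intro hc
  have := congrArg Fin.val hc
  rw [natFin_val_of_lt h2] at this
  simp only [Fin.val_zero] at this
  omega

lemma cut_decomp {m : ℕ} (hm : 1 ≤ m) (h2m : 2*m + 3 ≤ n) (S : Finset (Fin n)) :
    ((S ×ˢ Sᶜ).filter (fun q => ringDist n q.1 q.2 ≤ m)).card
      = ∑ v ∈ Icc 1 m, B S v + ∑ v ∈ Icc 1 m, B Sᶜ v := by
  classical
  set A := (Icc 1 m).biUnion
    (fun v => (S ×ˢ Sᶜ).filter (fun q => q.2 = q.1 + natFin n v)) with hA
  set Bb := (Icc 1 m).biUnion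
    (fun v => (S ×ˢ Sᶜ).filter (fun q => q.1 = q.2 + natFin n v)) with hB
  have hvlt : ∀ v ∈ Icc 1 m, v < n := by
    intro v hv
    have := (mem_Icc.mp hv).2
    omega
  have hEq : (S ×ˢ Sᶜ).filter (fun q => ringDist n q.1 q.2 ≤ m) = A ∪ Bb := by
    ext q
    simp only [mem_filter, Finset.mem_union, hA, hB, Finset.mem_biUnion]
    constructor
    · rintro ⟨hmem, hrd⟩
      obtain ⟨h1, h2⟩ := Finset.mem_product.mp hmem
      have hne : q.1 ≠ q.2 := fun h => (Finset.mem_compl.mp h2) (h ▸ h1)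
      rcases (ringDist_le_iff m q.1 q.2).mp hrd with hle | hge
      · left
        refine ⟨(q.2 - q.1).val, mem_Icc.mpr ⟨?_, hle⟩, hmem, ?_⟩
        · have hz : q.2 - q.1 ≠ 0 := sub_ne_zero.mpr (Ne.symm hne)
          have : (q.2 - q.1).val ≠ 0 := fun hc => hz (Fin.ext hc)
          omega
        · rw [natFin_self_val, add_comm, sub_add_cancel]
      · right
        have hrev := sub_val_rev hne
        have hb := (q.2 - q.1).isLt
        refine ⟨(q.1 - q.2).val, mem_Icc.mpr ⟨?_, by omega⟩, hmem, ?_⟩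
        · have hz : q.1 - q.2 ≠ 0 := sub_ne_zero.mpr hne
          have : (q.1 - q.2).val ≠ 0 := fun hc => hz (Fin.ext hc)
          omega
        · rw [natFin_self_val, add_comm, sub_add_cancel]
    · rintro (⟨v, hvI, hmem, he⟩ | ⟨v, hvI, hmem, he⟩)
      · refine ⟨hmem, (ringDist_le_iff m q.1 q.2).mpr (Or.inl ?_)⟩
        rw [he, add_sub_cancel_left, natFin_val_of_lt (hvlt v hvI)]
        exact (mem_Icc.mp hvI).2
      · refine ⟨hmem, (ringDist_le_iff m q.1 q.2).mpr (Or.inr ?_)⟩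
        have hv1 := (mem_Icc.mp hvI).1
        have hvm := (mem_Icc.mp hvI).2
        have hfz : natFin n v ≠ 0 := natFin_ne_zero hv1 (hvlt v hvI)
        have hne : q.1 ≠ q.2 := by
          intro hc
          rw [hc] at he
          exact hfz (left_eq_add.mp he)
        have hrev := sub_val_rev hne
        have h12 : (q.1 - q.2).val = v := by
          rw [he, add_sub_cancel_left, natFin_val_of_lt (hvlt v hvI)]
        omega
  have hdisjA : ∀ x ∈ Icc 1 m, ∀ y ∈ Icc 1 m, x ≠ y →
      Disjoint ((S ×ˢ Sᶜ).filter (fun q => q.2 = q.1 + natFin n x))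
        ((S ×ˢ Sᶜ).filter (fun q => q.2 = q.1 + natFin n y)) := by
    intro x hx y hy hxy
    rw [Finset.disjoint_left]
    intro q hq hq'
    have h1 := (mem_filter.mp hq).2
    have h2 := (mem_filter.mp hq').2
    rw [h1] at h2
    have := add_left_cancel h2
    have hval := congrArg Fin.val this
    rw [natFin_val_of_lt (hvlt x hx), natFin_val_of_lt (hvlt y hy)] at hval
    exact hxy hval
  have hdisjB : ∀ x ∈ Icc 1 m, ∀ y ∈ Icc 1 m, x ≠ y →
      Disjoint ((S ×ˢ Sᶜ).filter (fun q => q.1 = q.2 + natFin n x))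
        ((S ×ˢ Sᶜ).filter (fun q => q.1 = q.2 + natFin n y)) := by
    intro x hx y hy hxy
    rw [Finset.disjoint_left]
    intro q hq hq'
    have h1 := (mem_filter.mp hq).2
    have h2 := (mem_filter.mp hq').2
    rw [h1] at h2
    have := add_left_cancel h2
    have hval := congrArg Fin.val this
    rw [natFin_val_of_lt (hvlt x hx), natFin_val_of_lt (hvlt y hy)] at hval
    exact hxy hval
  have hdisjAB : Disjoint A Bb := by
    rw [Finset.disjoint_left]
    intro q hqA hqB
    rw [hA, Finset.mem_biUnion] at hqA
    rw [hB, Finset.mem_biUnion] at hqB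
    obtain ⟨v, hvI, hv⟩ := hqA
    obtain ⟨w, hwI, hw⟩ := hqB
    have he1 := (mem_filter.mp hv).2
    have he2 := (mem_filter.mp hw).2
    rw [he1, add_assoc] at he2
    have h0 : natFin n v + natFin n w = 0 := left_eq_add.mp he2
    rw [← natFin_add] at h0
    have hval := congrArg Fin.val h0
    rw [natFin_val] at hval
    simp only [Fin.val_zero] at hval
    have hv1 := (mem_Icc.mp hvI).1
    have hvm := (mem_Icc.mp hvI).2
    have hw1 := (mem_Icc.mp hwI).1
    have hwm := (mem_Icc.mp hwI).2
    rw [Nat.mod_eq_of_lt (by omega)] at hval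
    omega
  rw [hEq, Finset.card_union_of_disjoint hdisjAB, hA, hB,
    Finset.card_biUnion hdisjA, Finset.card_biUnion hdisjB]
  rw [Finset.sum_congr rfl (fun v _ => fiberA_card S v),
    Finset.sum_congr rfl (fun v _ => fiberB_card S v)]


lemma sum_w (k : ℕ) (p : ℝ) (S : Finset (Fin n)) :
    ∑ i ∈ S, ∑ j ∈ Sᶜ, shortcutWeight n k p i j
      = (((S ×ˢ Sᶜ).filter (fun q => ringDist n q.1 q.2 ≤ k / 2)).card : ℝ)
        + (((S.card * Sᶜ.card : ℕ) : ℝ)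
            - (((S ×ˢ Sᶜ).filter (fun q => ringDist n q.1 q.2 ≤ k / 2)).card : ℝ)) * p := by
  classical
  have hsplit := Finset.sum_filter_add_sum_filter_not (S ×ˢ Sᶜ)
    (fun q => ringDist n q.1 q.2 ≤ k/2) (fun q => shortcutWeight n k p q.1 q.2)
  rw [← Finset.sum_product', ← hsplit]
  have hc := Finset.card_filter_add_card_filter_not
    (s := S ×ˢ Sᶜ) (p := fun q => ringDist n q.1 q.2 ≤ k/2)
  rw [Finset.card_product] at hc
  have h1 : ∀ q ∈ (S ×ˢ Sᶜ).filter (fun q => ringDist n q.1 q.2 ≤ k/2),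
      shortcutWeight n k p q.1 q.2 = 1 :=
    fun q hq => if_pos (mem_filter.mp hq).2
  have h2 : ∀ q ∈ (S ×ˢ Sᶜ).filter (fun q => ¬ ringDist n q.1 q.2 ≤ k/2),
      shortcutWeight n k p q.1 q.2 = p :=
    fun q hq => if_neg (mem_filter.mp hq).2
  rw [Finset.sum_congr rfl h1, Finset.sum_congr rfl h2, Finset.sum_const, Finset.sum_const,
    nsmul_eq_mul, mul_one, nsmul_eq_mul]
  have hc' : ((((S ×ˢ Sᶜ).filter (fun q => ringDist n q.1 q.2 ≤ k/2)).card : ℝ))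
      + (((S ×ˢ Sᶜ).filter (fun q => ¬ ringDist n q.1 q.2 ≤ k/2)).card : ℝ)
      = (S.card : ℝ) * (Sᶜ.card : ℝ) := by exact_mod_cast hc
  push_cast
  linear_combination p * hc'

end Aux

/-- the computation of `c_min` in the paper's Theorem 2.
In the expected-capacity graph of the small-world network with shortcuts, the minimum
`s`-`t` cut weight equals `k + (n-1-k) p`, for any distinct `s`, `t`. -/
theorem stmt_7 (n k : ℕ) (hn : 5 ≤ n) (hk2 : 2 ≤ k) (hk : k ≤ n - 3) (hke : Even k)
    (p : ℝ) (hp0 : 0 ≤ p) (hp1 : p ≤ 1)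
    (s t : Fin n) (hst : s ≠ t) :
    IsLeast {x : ℝ | ∃ S : Finset (Fin n), s ∈ S ∧ t ∉ S ∧
        x = ∑ i ∈ S, ∑ j ∈ Sᶜ, shortcutWeight n k p i j}
      ((k : ℝ) + ((n : ℝ) - 1 - (k : ℝ)) * p) := by
  haveI : NeZero n := ⟨by omega⟩
  obtain ⟨m, hkm⟩ := hke
  have hm2 : k / 2 = m := by omega
  have hm1 : 1 ≤ m := by omega
  have h2m : 2 * m + 3 ≤ n := by omega
  constructor
  · refine ⟨{s}, Finset.mem_singleton_self s, fun h => hst (Finset.mem_singleton.mp h).symm, ?_⟩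
    rw [sum_w]
    have hL : ((({s} ×ˢ ({s} : Finset (Fin n))ᶜ).filter
        (fun q => ringDist n q.1 q.2 ≤ k/2)).card) = 2 * m := by
      rw [hm2, cut_decomp hm1 h2m]
      have hBs : ∀ v ∈ Icc 1 m, B ({s} : Finset (Fin n)) v = 1 := by
        intro v hv
        have hv1 := (mem_Icc.mp hv).1
        have hvm := (mem_Icc.mp hv).2
        have hfz : natFin n v ≠ 0 := natFin_ne_zero hv1 (by omega)
        rw [B, Finset.filter_singleton, if_pos, Finset.card_singleton]
        simp only [Finset.mem_singleton]
        intro hc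
        exact hfz (left_eq_add.mp hc.symm)
      have hBsc : ∀ v ∈ Icc 1 m, B ({s} : Finset (Fin n))ᶜ v = 1 := by
        intro v hv
        have hv1 := (mem_Icc.mp hv).1
        have hvm := (mem_Icc.mp hv).2
        have hfz : natFin n v ≠ 0 := natFin_ne_zero hv1 (by omega)
        rw [B]
        have : (({s} : Finset (Fin n))ᶜ.filter (fun j => j + natFin n v ∉ ({s}:Finset (Fin n))ᶜ))
            = {s - natFin n v} := by
          ext j
          simp only [Finset.mem_filter, Finset.mem_compl, Finset.mem_singleton, not_not]
          constructor
          · rintro ⟨h1, h2⟩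
            exact eq_sub_iff_add_eq.mpr h2
          · rintro rfl
            constructor
            · intro hc
              apply hfz
              rwa [sub_eq_self] at hc
            · rw [sub_add_cancel]
        rw [this, Finset.card_singleton]
      rw [Finset.sum_congr rfl hBs, Finset.sum_congr rfl hBsc, Finset.sum_const,
        Nat.card_Icc, smul_eq_mul, mul_one]
      omega
    rw [hL, Finset.card_singleton, Finset.card_compl, Fintype.card_fin, one_mul,
      Finset.card_singleton]
    have hcast : ((n - 1 : ℕ) : ℝ) = (n : ℝ) - 1 := by
      rw [Nat.cast_sub (by omega)]
      norm_num
    rw [hcast]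
    have hkcast : (k : ℝ) = 2 * m := by
      rw [hkm]; push_cast; ring
    rw [hkcast]
    push_cast
    ring
  · rintro x ⟨S, hsS, htS, rfl⟩
    rw [sum_w]
    have hS : S.Nonempty := ⟨s, hsS⟩
    have hSc : Sᶜ.Nonempty := ⟨t, Finset.mem_compl.mpr htS⟩
    have hck : 2 * m ≤ ((S ×ˢ Sᶜ).filter (fun q => ringDist n q.1 q.2 ≤ k/2)).card := by
      rw [hm2, cut_decomp hm1 h2m]
      have h1 := key hm1 h2m hS hSc
      have h2 := key hm1 h2m hSc (by rw [compl_compl]; exact hS)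
      omega
    have hN : n - 1 ≤ S.card * Sᶜ.card := by
      have h1 : 1 ≤ S.card := Finset.card_pos.mpr hS
      have h2 : 1 ≤ Sᶜ.card := Finset.card_pos.mpr hSc
      have h3 : S.card + Sᶜ.card = n := by
        rw [Finset.card_add_card_compl, Fintype.card_fin]
      obtain ⟨a, ha⟩ := Nat.exists_eq_add_of_le h1
      obtain ⟨b, hb⟩ := Nat.exists_eq_add_of_le h2
      have hexp : (1+a)*(1+b) = 1 + a + b + a*b := by ring
      rw [ha, hb, hexp]
      omega
    set c := ((S ×ˢ Sᶜ).filter (fun q => ringDist n q.1 q.2 ≤ k/2)).card with hcdef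
    have hc' : (2*m : ℝ) ≤ (c : ℝ) := by exact_mod_cast hck
    have hN' : ((n:ℝ) - 1) ≤ ((S.card * Sᶜ.card : ℕ) : ℝ) := by
      have h := (Nat.cast_le (α := ℝ)).mpr hN
      rw [Nat.cast_sub (by omega)] at h
      push_cast at h ⊢
      linarith
    have hkcast : (k : ℝ) = 2 * m := by
      rw [hkm]; push_cast; ring
    rw [hkcast]
    nlinarith [mul_nonneg (sub_nonneg.mpr hc') (sub_nonneg.mpr hp1),
      mul_nonneg (sub_nonneg.mpr hN') hp0]
end
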